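/- arXiv:2302.11882 — 6 statements merged into one kernel-verified Lean document; each statement's English description precedes it below -/
import Mathlib

section
/- Let A be a (not necessarily commutative) ring, ι a linearly ordered type, and x : ι → A a family of elements such that x i * x j = - (x j * x i) whenever i ≠ j. For a finite subset I of ι let X_I denote the product of the x i over i ∈ I taken in increasing order. Then for any two finite subsets I and J of ι, X_I * X_J = (-1)^(|I|·|J| - |I ∩ J|) * (X_J * X_I). -/
private lemma chord_sign_comm {A : Type*} [Ring A] (n : ℕ) (a : A) :
    (-1 : A) ^ n * a = a * (-1 : A) ^ n :=
  ((Commute.neg_one_left a).pow_left n).eq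

private lemma chord_auxA {A : Type*} [Ring A] {ι : Type*} [DecidableEq ι] (x : ι → A)
    (hx : ∀ i j, i ≠ j → x i * x j = -(x j * x i)) (i : ι) (l : List ι) :
    x i * (l.map x).prod =
      (-1 : A) ^ (l.length + l.count i) * ((l.map x).prod * x i) := by
  induction l with
  | nil => simp
  | cons a t ih =>
    simp only [List.map_cons, List.prod_cons, List.length_cons]
    by_cases h : a = i
    · subst h
      rw [List.count_cons_self,
        show t.length + 1 + (t.count a + 1) = (t.length + t.count a) + 2 by omega]
      calc x a * (x a * (t.map x).prod)
          = x a * ((-1 : A) ^ (t.length + t.count a) * ((t.map x).prod * x a)) := by rw [ih]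
        _ = (-1 : A) ^ (t.length + t.count a) * (x a * ((t.map x).prod * x a)) := by
            rw [← mul_assoc, ← chord_sign_comm, mul_assoc]
        _ = (-1 : A) ^ (t.length + t.count a + 2) * (x a * (t.map x).prod * x a) := by
            conv_rhs => rw [pow_add, neg_one_sq, mul_one]
            rw [mul_assoc]
    · have h' : i ≠ a := fun he => h he.symm
      rw [List.count_cons_of_ne h,
        show t.length + 1 + t.count i = (t.length + t.count i) + 1 by omega]
      calc x i * (x a * (t.map x).prod)
          = (x i * x a) * (t.map x).prod := by rw [mul_assoc]
        _ = -(x a * (x i * (t.map x).prod)) := by rw [hx i a h', neg_mul, mul_assoc]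
        _ = -(x a * ((-1 : A) ^ (t.length + t.count i) * ((t.map x).prod * x i))) := by rw [ih]
        _ = -((-1 : A) ^ (t.length + t.count i) * (x a * ((t.map x).prod * x i))) := by
            rw [← mul_assoc, ← chord_sign_comm, mul_assoc]
        _ = (-1 : A) ^ (t.length + t.count i + 1) * (x a * (t.map x).prod * x i) := by
            rw [pow_succ, mul_neg_one, neg_mul, mul_assoc]

private lemma chord_auxB {A : Type*} [Ring A] {ι : Type*} [DecidableEq ι] (x : ι → A)
    (hx : ∀ i j, i ≠ j → x i * x j = -(x j * x i)) (l₁ l₂ : List ι) :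
    (l₁.map x).prod * (l₂.map x).prod =
      (-1 : A) ^ (l₁.length * l₂.length + (l₁.map (fun i => l₂.count i)).sum) *
        ((l₂.map x).prod * (l₁.map x).prod) := by
  induction l₁ with
  | nil => simp
  | cons a t ih =>
    simp only [List.map_cons, List.prod_cons, List.length_cons, List.sum_cons]
    rw [show (t.length + 1) * l₂.length + (l₂.count a + (t.map (fun i => l₂.count i)).sum)
        = (t.length * l₂.length + (t.map (fun i => l₂.count i)).sum)
          + (l₂.length + l₂.count a) by ring]
    calc (x a * (t.map x).prod) * (l₂.map x).prod
        = x a * ((t.map x).prod * (l₂.map x).prod) := by rw [mul_assoc]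
      _ = x a * ((-1 : A) ^ (t.length * l₂.length + (t.map (fun i => l₂.count i)).sum) *
            ((l₂.map x).prod * (t.map x).prod)) := by rw [ih]
      _ = (-1 : A) ^ (t.length * l₂.length + (t.map (fun i => l₂.count i)).sum) *
            ((x a * (l₂.map x).prod) * (t.map x).prod) := by
          rw [← mul_assoc, ← chord_sign_comm, mul_assoc, ← mul_assoc (x a)]
      _ = (-1 : A) ^ (t.length * l₂.length + (t.map (fun i => l₂.count i)).sum) *
            (((-1 : A) ^ (l₂.length + l₂.count a) * ((l₂.map x).prod * x a)) *
              (t.map x).prod) := by rw [chord_auxA x hx a l₂]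
      _ = (-1 : A) ^ (t.length * l₂.length + (t.map (fun i => l₂.count i)).sum
              + (l₂.length + l₂.count a)) *
            ((l₂.map x).prod * (x a * (t.map x).prod)) := by
          simp [pow_add, mul_assoc]

/-- Sign rule for disentangling chords: for a family of pairwise anticommuting elements
`x i` of a ring and finite index sets `I`, `J`, writing `X_I` for the product of the `x i`
over `i ∈ I` in increasing order, we have
`X_I * X_J = (-1)^(|I|·|J| - |I ∩ J|) * (X_J * X_I)`. -/
theorem chord_disentangling_sign {A : Type*} [Ring A] {ι : Type*} [LinearOrder ι]
    (x : ι → A) (hx : ∀ i j, i ≠ j → x i * x j = -(x j * x i))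
    (I J : Finset ι) :
    ((I.sort (· ≤ ·)).map x).prod * ((J.sort (· ≤ ·)).map x).prod =
      (-1 : A) ^ (I.card * J.card - (I ∩ J).card) *
        (((J.sort (· ≤ ·)).map x).prod * ((I.sort (· ≤ ·)).map x).prod) := by
  classical
  have hB := chord_auxB x hx (I.sort (· ≤ ·)) (J.sort (· ≤ ·))
  have hlen1 : (I.sort (· ≤ ·)).length = I.card := Finset.length_sort _
  have hlen2 : (J.sort (· ≤ ·)).length = J.card := Finset.length_sort _
  have hcount : ∀ i, (J.sort (· ≤ ·)).count i = if i ∈ J then 1 else 0 := by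
    intro i
    by_cases hi : i ∈ J
    · rw [List.count_eq_one_of_mem (J.sort_nodup _) (by simpa using hi), if_pos hi]
    · rw [List.count_eq_zero_of_not_mem (by simpa using hi), if_neg hi]
  have hsum : ((I.sort (· ≤ ·)).map (fun i => (J.sort (· ≤ ·)).count i)).sum
      = (I ∩ J).card := by
    rw [show ((I.sort (· ≤ ·)).map (fun i => (J.sort (· ≤ ·)).count i)).sum
        = ∑ i ∈ I, (J.sort (· ≤ ·)).count i from
      ((I.sort_perm_toList _).map _ |>.sum_eq).trans (Finset.sum_map_toList I _)]
    simp only [hcount]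
    rw [Finset.sum_ite_mem, Finset.sum_const, smul_eq_mul, mul_one]
  rw [hlen1, hlen2, hsum] at hB
  have hk : (I ∩ J).card ≤ I.card * J.card := by
    rcases Nat.eq_zero_or_pos (I ∩ J).card with h0 | h0
    · omega
    · have hJ : 1 ≤ J.card := by
        have := Finset.card_le_card (Finset.inter_subset_right (s₁ := I) (s₂ := J))
        omega
      calc (I ∩ J).card ≤ I.card := Finset.card_le_card Finset.inter_subset_left
        _ ≤ I.card * J.card := Nat.le_mul_of_pos_right _ hJ
  rw [hB, show I.card * J.card + (I ∩ J).card
      = (I.card * J.card - (I ∩ J).card) + 2 * (I ∩ J).card by omega,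
    pow_add, pow_mul, neg_one_sq, one_pow, mul_one]
end

section
/- Fix a real λ > 0 and a natural number m, and for each N set p_N = ⌊√(λ·N)⌋. Then the limit as N → ∞ of (p_N choose m) · (N − p_N choose p_N − m) / (N choose p_N) exists and equals (λ^m / m!) · e^(−λ). In other words, in the double scaling limit (N → ∞ with p_N² / N → λ) the overlap size of two uniformly random p_N-element subsets of an N-element set converges in distribution to a Poisson distribution with mean λ. -/
open Filter Real Finset

namespace OverlapAux

lemma sqrt_atTop : Tendsto Real.sqrt atTop atTop := by
  refine (tendsto_rpow_atTop (by norm_num : (0:ℝ) < 1/2)).congr ?_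
  intro x
  exact (Real.sqrt_eq_rpow x).symm

variable {lam : ℝ}

noncomputable def pp (lam : ℝ) (N : ℕ) : ℕ := ⌊Real.sqrt (lam * N)⌋₊

lemma tendsto_pp_atTop (hlam : 0 < lam) : Tendsto (pp lam) atTop atTop := by
  exact tendsto_nat_floor_atTop.comp
    (sqrt_atTop.comp ((tendsto_natCast_atTop_atTop (R := ℝ)).const_mul_atTop hlam))

lemma tendsto_inv_sqrt : Tendsto (fun N : ℕ => 1 / Real.sqrt N) atTop (nhds 0) := by
  exact ((sqrt_atTop.comp (tendsto_natCast_atTop_atTop (R := ℝ))).inv_tendsto_atTop).congr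
    fun N => by simp [one_div]

lemma tendsto_pp_div_sqrt (hlam : 0 < lam) :
    Tendsto (fun N : ℕ => (pp lam N : ℝ) / Real.sqrt N) atTop (nhds (Real.sqrt lam)) := by
  have hlow : Tendsto (fun N : ℕ => Real.sqrt lam - 1 / Real.sqrt N) atTop
      (nhds (Real.sqrt lam)) := by
    simpa using tendsto_const_nhds.sub tendsto_inv_sqrt
  refine tendsto_of_tendsto_of_tendsto_of_le_of_le' hlow tendsto_const_nhds ?_ ?_
  · filter_upwards [eventually_ge_atTop 1] with N hN
    have hN0 : (0:ℝ) < Real.sqrt N := Real.sqrt_pos.2 (by exact_mod_cast hN)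
    have h1 : Real.sqrt (lam * N) - 1 < pp lam N := Nat.sub_one_lt_floor _
    have h2 : Real.sqrt (lam * N) = Real.sqrt lam * Real.sqrt N :=
      Real.sqrt_mul hlam.le N
    rw [sub_le_iff_le_add, ← add_div, le_div_iff₀ hN0]
    nlinarith [h1, h2]
  · filter_upwards [eventually_ge_atTop 1] with N hN
    have hN0 : (0:ℝ) < Real.sqrt N := Real.sqrt_pos.2 (by exact_mod_cast hN)
    have h1 : (pp lam N : ℝ) ≤ Real.sqrt (lam * N) := Nat.floor_le (Real.sqrt_nonneg _)
    have h2 : Real.sqrt (lam * N) = Real.sqrt lam * Real.sqrt N :=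
      Real.sqrt_mul hlam.le N
    rw [div_le_iff₀ hN0]
    nlinarith

lemma tendsto_pp_sq_div (hlam : 0 < lam) :
    Tendsto (fun N : ℕ => (pp lam N : ℝ) ^ 2 / N) atTop (nhds lam) := by
  have h := (tendsto_pp_div_sqrt hlam).pow 2
  rw [Real.sq_sqrt hlam.le] at h
  refine h.congr' ?_
  filter_upwards [eventually_ge_atTop 1] with N hN
  have hN0 : (0:ℝ) < N := by exact_mod_cast hN
  rw [div_pow, Real.sq_sqrt hN0.le]

lemma tendsto_pp_div (hlam : 0 < lam) :
    Tendsto (fun N : ℕ => (pp lam N : ℝ) / N) atTop (nhds 0) := by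
  have h := (tendsto_pp_div_sqrt hlam).mul tendsto_inv_sqrt
  rw [mul_zero] at h
  refine h.congr' ?_
  filter_upwards [eventually_ge_atTop 1] with N hN
  have hN0 : (0:ℝ) < N := by exact_mod_cast hN
  have : Real.sqrt N * Real.sqrt N = N := Real.mul_self_sqrt hN0.le
  rw [div_mul_div_comm, mul_one, this]


lemma ev_le_pp (hlam : 0 < lam) (m : ℕ) : ∀ᶠ N : ℕ in atTop, m ≤ pp lam N :=
  (tendsto_pp_atTop hlam).eventually_ge_atTop m

lemma ev_two_pp_lt (hlam : 0 < lam) : ∀ᶠ N : ℕ in atTop, 2 * pp lam N < N := by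
  have h := (tendsto_pp_div hlam).eventually (gt_mem_nhds (by norm_num : (0:ℝ) < 1/3))
  filter_upwards [h, eventually_ge_atTop 1] with N h1 hN
  have hN0 : (0:ℝ) < N := by exact_mod_cast hN
  rw [div_lt_iff₀ hN0] at h1
  have : (2 * pp lam N : ℝ) < N := by push_cast; nlinarith
  exact_mod_cast this

/-- limit of `(p-m)*p/N`. -/
lemma tendsto_A (hlam : 0 < lam) (m : ℕ) :
    Tendsto (fun N : ℕ => ((pp lam N - m : ℕ) : ℝ) * pp lam N / N) atTop (nhds lam) := by
  have h := (tendsto_pp_sq_div hlam).sub ((tendsto_pp_div hlam).const_mul (m : ℝ))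
  rw [mul_zero, sub_zero] at h
  refine h.congr' ?_
  filter_upwards [ev_le_pp hlam m] with N hm
  have : ((pp lam N - m : ℕ) : ℝ) = (pp lam N : ℝ) - m := by
    push_cast [hm]; ring
  rw [this]
  ring

/-- limit of `(p-m)*p/(N-2p)`. -/
lemma tendsto_B (hlam : 0 < lam) (m : ℕ) :
    Tendsto (fun N : ℕ => ((pp lam N - m : ℕ) : ℝ) * pp lam N / ((N : ℝ) - 2 * pp lam N))
      atTop (nhds lam) := by
  have hden : Tendsto (fun N : ℕ => 1 - 2 * ((pp lam N : ℝ) / N)) atTop (nhds 1) := by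
    have := ((tendsto_pp_div hlam).const_mul (2:ℝ))
    rw [mul_zero] at this
    simpa using tendsto_const_nhds.sub this
  have h := (tendsto_A hlam m).div hden one_ne_zero
  rw [div_one] at h
  refine h.congr' ?_
  filter_upwards [ev_two_pp_lt hlam, eventually_ge_atTop 1] with N h2 hN
  have hN0 : (0:ℝ) < N := by exact_mod_cast hN
  have h2' : (2 * pp lam N : ℝ) < N := by exact_mod_cast h2
  have hd : (0:ℝ) < (N : ℝ) - 2 * pp lam N := by push_cast at h2' ⊢; linarith
  rw [Pi.div_apply]
  field_simp


lemma div_div_div_same {a b c : ℝ} (hc : c ≠ 0) : a / c / (b / c) = a / b := by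
  rcases eq_or_ne b 0 with rfl | hb
  · simp
  · field_simp

lemma tendsto_P1 (hlam : 0 < lam) (m : ℕ) :
    Tendsto (fun N : ℕ => ∏ j ∈ range m,
      ((pp lam N : ℝ) - j) ^ 2 / ((N : ℝ) - ((pp lam N : ℝ) - m + j)))
      atTop (nhds (lam ^ m)) := by
  have hconst : (lam ^ m) = ∏ _j ∈ range m, lam := by rw [prod_const, card_range]
  rw [hconst]
  refine tendsto_finset_prod _ fun j hj => ?_
  have hnum : Tendsto (fun N : ℕ => ((pp lam N : ℝ) - j) ^ 2 / N) atTop (nhds lam) := by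
    have h := ((tendsto_pp_div_sqrt hlam).sub (tendsto_inv_sqrt.const_mul (j:ℝ))).pow 2
    rw [mul_zero, sub_zero, Real.sq_sqrt hlam.le] at h
    refine h.congr' ?_
    filter_upwards [eventually_ge_atTop 1] with N hN
    have hN0 : (0:ℝ) < Real.sqrt N := Real.sqrt_pos.2 (by exact_mod_cast hN)
    have hNN : Real.sqrt N * Real.sqrt N = N := Real.mul_self_sqrt (by positivity)
    rw [mul_one_div, ← sub_div, div_pow, Real.sq_sqrt (by positivity : (0:ℝ) ≤ (N:ℝ))]
  have hden : Tendsto (fun N : ℕ => ((N:ℝ) - ((pp lam N : ℝ) - m + j)) / N)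
      atTop (nhds 1) := by
    have h := ((tendsto_const_nhds (x := (1:ℝ))).sub (tendsto_pp_div hlam)).add
      (tendsto_one_div_atTop_nhds_zero_nat.const_mul ((m:ℝ) - j))
    rw [mul_zero, sub_zero, add_zero] at h
    refine h.congr' ?_
    filter_upwards [eventually_ge_atTop 1] with N hN
    have hN0 : ((N:ℝ)) ≠ 0 := by
      have : (0:ℝ) < N := by exact_mod_cast hN
      exact this.ne'
    field_simp
    ring
  have h := hnum.div hden one_ne_zero
  rw [div_one] at h
  refine h.congr' ?_
  filter_upwards [eventually_ge_atTop 1] with N hN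
  have hN0 : ((N:ℝ)) ≠ 0 := by
    have : (0:ℝ) < N := by exact_mod_cast hN
    exact this.ne'
  exact div_div_div_same hN0


lemma tendsto_G (hlam : 0 < lam) (m : ℕ) :
    Tendsto (fun N : ℕ => ∏ i ∈ range (pp lam N - m),
      (((N : ℝ) - pp lam N - i) / ((N : ℝ) - i))) atTop (nhds (Real.exp (-lam))) := by
  have hpos : ∀ N : ℕ, 2 * pp lam N < N → ∀ i ∈ range (pp lam N - m),
      (0:ℝ) < (N : ℝ) - pp lam N - i ∧ (0:ℝ) < (N : ℝ) - i ∧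
      ((N:ℝ) - 2 * pp lam N) ≤ (N : ℝ) - pp lam N - i := by
    intro N h2 i hi
    rw [mem_range] at hi
    have h1 : i + pp lam N < N := by omega
    have h2' : i < N := by omega
    have h3 : i ≤ pp lam N := by omega
    constructor
    · have : ((i + pp lam N : ℕ) : ℝ) < N := by exact_mod_cast h1
      push_cast at this
      linarith
    constructor
    · have : ((i:ℕ) : ℝ) < N := by exact_mod_cast h2'
      linarith
    · have : ((i:ℕ) : ℝ) ≤ pp lam N := by exact_mod_cast h3
      linarith
  have hS : Tendsto (fun N : ℕ => ∑ i ∈ range (pp lam N - m),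
      Real.log (((N : ℝ) - pp lam N - i) / ((N : ℝ) - i))) atTop (nhds (-lam)) := by
    refine tendsto_of_tendsto_of_tendsto_of_le_of_le' ((tendsto_B hlam m).neg)
      ((tendsto_A hlam m).neg) ?_ ?_
    · -- lower bound
      filter_upwards [ev_two_pp_lt hlam, eventually_ge_atTop 1] with N h2 hN
      have h2R : (2 * pp lam N : ℝ) < N := by exact_mod_cast h2
      have hd : (0:ℝ) < (N:ℝ) - 2 * pp lam N := by push_cast at h2R ⊢; linarith
      have key : ∀ i ∈ range (pp lam N - m),
          -((pp lam N : ℝ) / ((N:ℝ) - 2 * pp lam N)) ≤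
            Real.log (((N : ℝ) - pp lam N - i) / ((N : ℝ) - i)) := by
        intro i hi
        obtain ⟨hp1, hp2, hp3⟩ := hpos N h2 i hi
        have ht : (0:ℝ) < ((N : ℝ) - pp lam N - i) / ((N : ℝ) - i) := div_pos hp1 hp2
        have hlog := Real.one_sub_inv_le_log_of_pos ht
        have heq : 1 - (((N : ℝ) - pp lam N - i) / ((N : ℝ) - i))⁻¹ =
            -((pp lam N : ℝ) / ((N:ℝ) - pp lam N - i)) := by
          rw [inv_div]
          field_simp
          ring
        have hmono : (pp lam N : ℝ) / ((N:ℝ) - pp lam N - i) ≤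
            (pp lam N : ℝ) / ((N:ℝ) - 2 * pp lam N) := by
          rw [div_le_div_iff₀ hp1 hd]
          have h0 : (0:ℝ) ≤ (pp lam N : ℝ) := Nat.cast_nonneg _
          nlinarith
        rw [heq] at hlog
        linarith
      have hsum := Finset.sum_le_sum key
      rw [Finset.sum_const, card_range, nsmul_eq_mul] at hsum
      calc -(((pp lam N - m : ℕ) : ℝ) * (pp lam N) / ((N:ℝ) - 2 * pp lam N))
          = ((pp lam N - m : ℕ) : ℝ) * (-((pp lam N : ℝ) / ((N:ℝ) - 2 * pp lam N))) := by
            ring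
        _ ≤ _ := hsum
    · -- upper bound
      filter_upwards [ev_two_pp_lt hlam, eventually_ge_atTop 1] with N h2 hN
      have hN0 : (0:ℝ) < N := by exact_mod_cast hN
      have key : ∀ i ∈ range (pp lam N - m),
          Real.log (((N : ℝ) - pp lam N - i) / ((N : ℝ) - i)) ≤
            -((pp lam N : ℝ) / N) := by
        intro i hi
        obtain ⟨hp1, hp2, _⟩ := hpos N h2 i hi
        have ht : (0:ℝ) < ((N : ℝ) - pp lam N - i) / ((N : ℝ) - i) := div_pos hp1 hp2
        have hlog := Real.log_le_sub_one_of_pos ht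
        have heq : ((N : ℝ) - pp lam N - i) / ((N : ℝ) - i) - 1 =
            -((pp lam N : ℝ) / ((N:ℝ) - i)) := by
          field_simp
          ring
        have hmono : (pp lam N : ℝ) / ((N:ℝ)) ≤ (pp lam N : ℝ) / ((N:ℝ) - i) := by
          rw [div_le_div_iff₀ hN0 hp2]
          have h0 : (0:ℝ) ≤ (pp lam N : ℝ) := Nat.cast_nonneg _
          have h0i : (0:ℝ) ≤ (i : ℝ) := Nat.cast_nonneg _
          nlinarith
        rw [heq] at hlog
        linarith
      have hsum := Finset.sum_le_sum key
      rw [Finset.sum_const, card_range, nsmul_eq_mul] at hsum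
      calc (∑ i ∈ range (pp lam N - m),
            Real.log (((N : ℝ) - pp lam N - i) / ((N : ℝ) - i)))
          ≤ ((pp lam N - m : ℕ) : ℝ) * (-((pp lam N : ℝ) / N)) := hsum
        _ = -(((pp lam N - m : ℕ) : ℝ) * (pp lam N) / N) := by ring
  refine ((Real.continuous_exp.tendsto _).comp hS).congr' ?_
  filter_upwards [ev_two_pp_lt hlam] with N h2
  simp only [Function.comp]
  rw [Real.exp_sum]
  refine Finset.prod_congr rfl fun i hi => ?_
  obtain ⟨hp1, hp2, _⟩ := hpos N h2 i hi
  exact Real.exp_log (div_pos hp1 hp2)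


lemma key_eq (hlam : 0 < lam) (m N : ℕ) (hm : m ≤ pp lam N) (h2 : 2 * pp lam N < N) :
    ((pp lam N).choose m : ℝ) * ((N - pp lam N).choose (pp lam N - m) : ℝ) /
      (N.choose (pp lam N) : ℝ) =
    (1 / (m.factorial : ℝ)) *
      (∏ j ∈ range m, ((pp lam N : ℝ) - j) ^ 2 / ((N : ℝ) - ((pp lam N : ℝ) - m + j))) *
      (∏ i ∈ range (pp lam N - m), (((N : ℝ) - pp lam N - i) / ((N : ℝ) - i))) := by
  set p := pp lam N with hp
  have hpN : p ≤ N := by omega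
  -- cast descFactorials to real products
  have hA : ((p.descFactorial m : ℕ) : ℝ) = ∏ j ∈ range m, ((p : ℝ) - j) := by
    rw [Nat.descFactorial_eq_prod_range, Nat.cast_prod]
    refine Finset.prod_congr rfl fun j hj => ?_
    rw [mem_range] at hj
    rw [Nat.cast_sub (by omega)]
  have hB : (((N - p).descFactorial (p - m) : ℕ) : ℝ)
      = ∏ i ∈ range (p - m), ((N : ℝ) - p - i) := by
    rw [Nat.descFactorial_eq_prod_range, Nat.cast_prod]
    refine Finset.prod_congr rfl fun i hi => ?_
    rw [mem_range] at hi
    rw [Nat.cast_sub (by omega), Nat.cast_sub (by omega)]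
  have hD : ((N.descFactorial p : ℕ) : ℝ) = ∏ i ∈ range p, ((N : ℝ) - i) := by
    rw [Nat.descFactorial_eq_prod_range, Nat.cast_prod]
    refine Finset.prod_congr rfl fun i hi => ?_
    rw [mem_range] at hi
    rw [Nat.cast_sub (by omega)]
  -- split the big product
  have hsplit : (∏ i ∈ range p, ((N : ℝ) - i)) =
      (∏ i ∈ range (p - m), ((N : ℝ) - i)) *
        ∏ j ∈ range m, ((N : ℝ) - ((p : ℝ) - m + j)) := by
    have h0 := Finset.prod_range_add (fun i : ℕ => (N : ℝ) - i) (p - m) m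
    rw [show (p - m) + m = p by omega] at h0
    rw [h0]
    congr 1
    refine Finset.prod_congr rfl fun j hj => ?_
    have : (((p - m) + j : ℕ) : ℝ) = (p : ℝ) - m + j := by
      push_cast [hm]; ring
    rw [this]
  -- cast identities
  have hmf : ((m.factorial : ℕ) : ℝ) ≠ 0 := by
    exact_mod_cast m.factorial_ne_zero
  have hpmf : (((p - m).factorial : ℕ) : ℝ) ≠ 0 := by
    exact_mod_cast (p - m).factorial_ne_zero
  have hpf : ((p.factorial : ℕ) : ℝ) ≠ 0 := by
    exact_mod_cast p.factorial_ne_zero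
  have h1 : ((p.descFactorial m : ℕ) : ℝ) = (m.factorial : ℝ) * (p.choose m : ℝ) := by
    exact_mod_cast Nat.descFactorial_eq_factorial_mul_choose p m
  have h2' : (((N - p).descFactorial (p - m) : ℕ) : ℝ)
      = ((p - m).factorial : ℝ) * ((N - p).choose (p - m) : ℝ) := by
    exact_mod_cast Nat.descFactorial_eq_factorial_mul_choose (N - p) (p - m)
  have h3 : ((N.descFactorial p : ℕ) : ℝ) = (p.factorial : ℝ) * (N.choose p : ℝ) := by
    exact_mod_cast Nat.descFactorial_eq_factorial_mul_choose N p
  have hfact : ((p.factorial : ℕ) : ℝ)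
      = ((p - m).factorial : ℝ) * ((p.descFactorial m : ℕ) : ℝ) := by
    exact_mod_cast (Nat.factorial_mul_descFactorial hm).symm
  -- positivity of products
  have hApos : (0:ℝ) < ∏ j ∈ range m, ((p : ℝ) - j) := by
    refine Finset.prod_pos fun j hj => ?_
    rw [mem_range] at hj
    have : (j : ℝ) < p := by exact_mod_cast lt_of_lt_of_le hj hm
    linarith
  have hBpos : (0:ℝ) < ∏ i ∈ range (p - m), ((N : ℝ) - p - i) := by
    refine Finset.prod_pos fun i hi => ?_
    rw [mem_range] at hi
    have : ((i + p : ℕ) : ℝ) < N := by exact_mod_cast (by omega : i + p < N)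
    push_cast at this
    linarith
  have hD1pos : (0:ℝ) < ∏ i ∈ range (p - m), ((N : ℝ) - i) := by
    refine Finset.prod_pos fun i hi => ?_
    rw [mem_range] at hi
    have : ((i : ℕ) : ℝ) < N := by exact_mod_cast (by omega : i < N)
    linarith
  have hD2pos : (0:ℝ) < ∏ j ∈ range m, ((N : ℝ) - ((p : ℝ) - m + j)) := by
    refine Finset.prod_pos fun j hj => ?_
    rw [mem_range] at hj
    have hj' : (j : ℝ) < m := by exact_mod_cast hj
    have hmp : (m : ℝ) ≤ p := by exact_mod_cast hm
    have hpn : (p : ℝ) < N := by exact_mod_cast (by omega : p < N)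
    linarith
  -- choose in terms of products
  have hc1 : (p.choose m : ℝ) = (∏ j ∈ range m, ((p : ℝ) - j)) / (m.factorial : ℝ) := by
    rw [eq_div_iff hmf, ← hA, h1]; ring
  have hc2 : ((N - p).choose (p - m) : ℝ)
      = (∏ i ∈ range (p - m), ((N : ℝ) - p - i)) / ((p - m).factorial : ℝ) := by
    rw [eq_div_iff hpmf, ← hB, h2']; ring
  have hc3 : (N.choose p : ℝ)
      = ((∏ i ∈ range (p - m), ((N : ℝ) - i)) *
          ∏ j ∈ range m, ((N : ℝ) - ((p : ℝ) - m + j))) / (p.factorial : ℝ) := by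
    rw [eq_div_iff hpf, ← hsplit, ← hD, h3]; ring
  rw [hc1, hc2, hc3, Finset.prod_div_distrib, Finset.prod_div_distrib, Finset.prod_pow]
  rw [hfact, hA]
  field_simp

end OverlapAux

/-- Double scaling limit: with `p_N = ⌊√(λN)⌋`, the probability
`(p_N choose m)(N − p_N choose p_N − m)/(N choose p_N)` that two uniformly random
`p_N`-subsets of an `N`-set have overlap `m` tends to the Poisson weight
`(λ^m/m!)·e^(−λ)` as `N → ∞`. -/
theorem overlap_poisson_limit (lam : ℝ) (hlam : 0 < lam) (m : ℕ) :
    Filter.Tendsto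
      (fun N : ℕ =>
        (((⌊Real.sqrt (lam * N)⌋₊).choose m : ℝ) *
            ((N - ⌊Real.sqrt (lam * N)⌋₊).choose (⌊Real.sqrt (lam * N)⌋₊ - m) : ℝ)) /
          (N.choose ⌊Real.sqrt (lam * N)⌋₊ : ℝ))
      Filter.atTop
      (nhds (lam ^ m / (Nat.factorial m : ℝ) * Real.exp (-lam))) := by
  have hmain := ((tendsto_const_nhds (x := 1 / (m.factorial : ℝ))).mul
    (OverlapAux.tendsto_P1 hlam m)).mul (OverlapAux.tendsto_G hlam m)
  have heq : 1 / (m.factorial : ℝ) * lam ^ m * Real.exp (-lam)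
      = lam ^ m / (m.factorial : ℝ) * Real.exp (-lam) := by ring
  rw [heq] at hmain
  refine hmain.congr' ?_
  filter_upwards [OverlapAux.ev_le_pp hlam m, OverlapAux.ev_two_pp_lt hlam] with N hm h2
  exact (OverlapAux.key_eq hlam m N hm h2).symm
end

section
/- Fix reals α > 0 and β > 0 and a natural number m. For each N set p_N = ⌊√(α·N)⌋ and r_N = ⌊√(β·N)⌋. Then the limit as N → ∞ of (p_N choose m) · (N − p_N choose r_N − m) / (N choose r_N) exists and equals ((√(αβ))^m / m!) · e^(−√(αβ)). That is, the overlap of a random r_N-subset with a fixed p_N-subset of an N-element set is asymptotically Poisson with mean λ_{IJ} = √(αβ) = lim p_N r_N / N. -/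
open Filter Real Finset

private lemma cast_descFactorial_prod (n k : ℕ) (h : k ≤ n) :
    ((n.descFactorial k : ℕ) : ℝ) = ∏ j ∈ Finset.range k, ((n : ℝ) - j) := by
  rw [Nat.descFactorial_eq_prod_range, Nat.cast_prod]
  refine Finset.prod_congr rfl fun j hj => ?_
  rw [Nat.cast_sub (le_trans (Finset.mem_range.mp hj).le h)]

private lemma cast_descFactorial_div (n k : ℕ) (h : k ≤ n) :
    ((n.descFactorial k : ℕ) : ℝ) = (n.factorial : ℝ) / ((n - k).factorial : ℝ) := by
  rw [eq_div_iff (by positivity), ← Nat.cast_mul, mul_comm, Nat.factorial_mul_descFactorial h]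

private lemma sqrt_real_atTop : Tendsto Real.sqrt atTop atTop := by
  apply tendsto_atTop_atTop_of_monotone (fun x y hxy => Real.sqrt_le_sqrt hxy)
  intro c
  exact ⟨c ^ 2, by rw [Real.sqrt_sq_eq_abs]; exact le_abs_self c⟩

private lemma sqrt_nat_atTop : Tendsto (fun N : ℕ => Real.sqrt N) atTop atTop :=
  sqrt_real_atTop.comp tendsto_natCast_atTop_atTop

private lemma floor_sqrt_div (c : ℝ) (hc : 0 < c) :
    Tendsto (fun N : ℕ => (⌊Real.sqrt (c * N)⌋₊ : ℝ) / Real.sqrt N) atTop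
      (nhds (Real.sqrt c)) := by
  have hinv : Tendsto (fun N : ℕ => 1 / Real.sqrt N) atTop (nhds 0) :=
    sqrt_nat_atTop.inv_tendsto_atTop.congr (fun N => (one_div _).symm)
  have hlo : Tendsto (fun N : ℕ => Real.sqrt c - 1 / Real.sqrt N) atTop (nhds (Real.sqrt c)) := by
    simpa using tendsto_const_nhds.sub hinv
  apply tendsto_of_tendsto_of_tendsto_of_le_of_le' hlo tendsto_const_nhds
  · filter_upwards [eventually_ge_atTop 1] with N hN
    have hsN : (0:ℝ) < Real.sqrt N := Real.sqrt_pos.mpr (by exact_mod_cast hN)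
    rw [sub_le_iff_le_add, ← add_div, le_div_iff₀ hsN]
    have h1 := Nat.sub_one_lt_floor (Real.sqrt (c * N))
    have h2 : Real.sqrt c * Real.sqrt N = Real.sqrt (c * N) := (Real.sqrt_mul hc.le _).symm
    nlinarith [h1]
  · filter_upwards [eventually_ge_atTop 1] with N hN
    have hsN : (0:ℝ) < Real.sqrt N := Real.sqrt_pos.mpr (by exact_mod_cast hN)
    rw [div_le_iff₀ hsN, ← Real.sqrt_mul hc.le]
    exact Nat.floor_le (Real.sqrt_nonneg _)

private lemma pow_tendsto_exp (u : ℕ → ℝ) (k : ℕ → ℕ) (c : ℝ)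
    (hu : Tendsto u atTop (nhds 0))
    (hku : Tendsto (fun N => (k N : ℝ) * u N) atTop (nhds c))
    (hu0 : ∀ᶠ N in atTop, 0 ≤ u N) :
    Tendsto (fun N => (1 - u N) ^ (k N)) atTop (nhds (Real.exp (-c))) := by
  have hu2 : ∀ᶠ N in atTop, u N < 1 / 2 := hu.eventually (eventually_lt_nhds (by norm_num))
  have hs : Tendsto (fun N => (k N : ℝ) * Real.log (1 - u N)) atTop (nhds (-c)) := by
    have hup : Tendsto (fun N => -((k N : ℝ) * u N)) atTop (nhds (-c)) := hku.neg
    have hlo : Tendsto (fun N => -((k N : ℝ) * u N) / (1 - u N)) atTop (nhds (-c)) := by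
      have h1 : Tendsto (fun N => 1 - u N) atTop (nhds 1) := by
        simpa using tendsto_const_nhds.sub hu
      have h2 := hku.neg.div h1 one_ne_zero
      rw [div_one] at h2
      exact h2
    apply tendsto_of_tendsto_of_tendsto_of_le_of_le' hlo hup
    · filter_upwards [hu2, hu0] with N h2 h0
      have h1u : (0:ℝ) < 1 - u N := by linarith
      rw [div_le_iff₀ h1u]
      have hL : -Real.log (1 - u N) * (1 - u N) ≤ u N := by
        have h := Real.log_le_sub_one_of_pos (x := (1 - u N)⁻¹) (by positivity)
        rw [Real.log_inv] at h
        have h2' : (-Real.log (1 - u N)) * (1 - u N) ≤ ((1 - u N)⁻¹ - 1) * (1 - u N) :=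
          mul_le_mul_of_nonneg_right h h1u.le
        have h3' : ((1 - u N)⁻¹ - 1) * (1 - u N) = u N := by field_simp; ring
        linarith
      have hk0 : (0:ℝ) ≤ (k N : ℝ) := Nat.cast_nonneg _
      nlinarith [mul_le_mul_of_nonneg_left hL hk0]
    · filter_upwards [hu2, hu0] with N h2 h0
      have h1u : (0:ℝ) < 1 - u N := by linarith
      have hlog : Real.log (1 - u N) ≤ -u N := by
        have := Real.log_le_sub_one_of_pos h1u
        linarith
      calc (k N : ℝ) * Real.log (1 - u N) ≤ (k N : ℝ) * (-u N) :=
            mul_le_mul_of_nonneg_left hlog (Nat.cast_nonneg _)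
        _ = -((k N : ℝ) * u N) := by ring
  have := (Real.continuous_exp.tendsto _).comp hs
  apply this.congr'
  filter_upwards [hu2, hu0] with N h2 h0
  have h1u : (0:ℝ) < 1 - u N := by linarith
  simp only [Function.comp_apply]
  rw [Real.exp_nat_mul, Real.exp_log h1u]

private lemma inv_sqrt_nat : Tendsto (fun N : ℕ => 1 / Real.sqrt N) atTop (nhds 0) :=
  sqrt_nat_atTop.inv_tendsto_atTop.congr (fun N => (one_div _).symm)

private lemma div_shift (x d : ℕ → ℝ) (c : ℝ)
    (hx : Tendsto (fun N : ℕ => x N / N) atTop (nhds c))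
    (hd : Tendsto (fun N : ℕ => d N / N) atTop (nhds 1)) :
    Tendsto (fun N : ℕ => x N / d N) atTop (nhds c) := by
  have h := hx.div hd one_ne_zero
  rw [div_one] at h
  apply h.congr'
  filter_upwards [eventually_ge_atTop 1] with N hN
  have hN0 : (N : ℝ) ≠ 0 := by positivity
  show x N / ↑N / (d N / ↑N) = x N / d N
  rw [div_div_div_cancel_right₀ hN0]

private lemma key_ratio (sa sb : ℝ) (P R : ℕ → ℕ)
    (hP : Tendsto (fun N : ℕ => (P N : ℝ) / Real.sqrt N) atTop (nhds sa))
    (hR : Tendsto (fun N : ℕ => (R N : ℝ) / Real.sqrt N) atTop (nhds sb))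
    (c₁ c₂ : ℝ) (d : ℕ → ℝ)
    (hd : Tendsto (fun N : ℕ => d N / N) atTop (nhds 1)) :
    Tendsto (fun N : ℕ => ((P N : ℝ) - c₁) * ((R N : ℝ) - c₂) / d N) atTop
      (nhds (sa * sb)) := by
  apply div_shift _ _ _ _ hd
  have h1 : Tendsto (fun N : ℕ => ((P N : ℝ) / Real.sqrt N - c₁ / Real.sqrt N) *
      ((R N : ℝ) / Real.sqrt N - c₂ / Real.sqrt N)) atTop (nhds (sa * sb)) := by
    have := (hP.sub ((inv_sqrt_nat.const_mul c₁).congr (fun N => by rw [mul_one_div]))).mul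
      (hR.sub ((inv_sqrt_nat.const_mul c₂).congr (fun N => by rw [mul_one_div])))
    simpa using this
  apply h1.congr'
  filter_upwards [eventually_ge_atTop 1] with N hN
  have hsN : (0:ℝ) < Real.sqrt N := Real.sqrt_pos.mpr (by exact_mod_cast hN)
  have hmul : Real.sqrt N * Real.sqrt N = (N : ℝ) := Real.mul_self_sqrt (Nat.cast_nonneg N)
  rw [div_sub_div_same, div_sub_div_same, div_mul_div_comm, hmul]

private lemma sub_const_div_nat (c : ℝ) :
    Tendsto (fun N : ℕ => ((N : ℝ) - c) / N) atTop (nhds 1) := by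
  have h : Tendsto (fun N : ℕ => 1 - c * (1 / (N : ℝ))) atTop (nhds 1) := by
    simpa using tendsto_const_nhds.sub ((tendsto_one_div_atTop_nhds_zero_nat).const_mul c)
  apply h.congr'
  filter_upwards [eventually_ge_atTop 1] with N hN
  have hN0 : (N : ℝ) ≠ 0 := by positivity
  field_simp
set_option maxHeartbeats 1000000 in
/-- Generalized double scaling limit: with `p_N = ⌊√(αN)⌋` and `r_N = ⌊√(βN)⌋`, the
probability `(p_N choose m)(N − p_N choose r_N − m)/(N choose r_N)` that a uniformly
random `r_N`-subset of an `N`-set overlaps a fixed `p_N`-subset in exactly `m` elements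
tends to the Poisson weight `((√(αβ))^m/m!)·e^(−√(αβ))` as `N → ∞`. -/
theorem overlap_poisson_limit_general (a b : ℝ) (ha : 0 < a) (hb : 0 < b) (m : ℕ) :
    Filter.Tendsto
      (fun N : ℕ =>
        (((⌊Real.sqrt (a * N)⌋₊).choose m : ℝ) *
            ((N - ⌊Real.sqrt (a * N)⌋₊).choose (⌊Real.sqrt (b * N)⌋₊ - m) : ℝ)) /
          (N.choose ⌊Real.sqrt (b * N)⌋₊ : ℝ))
      Filter.atTop
      (nhds (Real.sqrt (a * b) ^ m / (Nat.factorial m : ℝ) *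
        Real.exp (-Real.sqrt (a * b)))) := by
  have hab : Real.sqrt (a * b) = Real.sqrt a * Real.sqrt b := Real.sqrt_mul ha.le b
  set sl : ℝ := Real.sqrt a * Real.sqrt b with hsl
  set p : ℕ → ℕ := fun N => ⌊Real.sqrt (a * N)⌋₊ with hpdef
  set r : ℕ → ℕ := fun N => ⌊Real.sqrt (b * N)⌋₊ with hrdef
  have hP : Tendsto (fun N : ℕ => (p N : ℝ) / Real.sqrt N) atTop (nhds (Real.sqrt a)) :=
    floor_sqrt_div a ha
  have hR : Tendsto (fun N : ℕ => (r N : ℝ) / Real.sqrt N) atTop (nhds (Real.sqrt b)) :=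
    floor_sqrt_div b hb
  have hmulself : ∀ N : ℕ, 1 ≤ N → Real.sqrt N * Real.sqrt N = (N : ℝ) :=
    fun N _ => Real.mul_self_sqrt (Nat.cast_nonneg N)
  have hpN : Tendsto (fun N : ℕ => (p N : ℝ) / N) atTop (nhds 0) := by
    have h := hP.mul inv_sqrt_nat
    rw [mul_zero] at h
    apply h.congr'
    filter_upwards [eventually_ge_atTop 1] with N hN
    rw [div_mul_div_comm, mul_one, hmulself N hN]
  have hrN : Tendsto (fun N : ℕ => (r N : ℝ) / N) atTop (nhds 0) := by
    have h := hR.mul inv_sqrt_nat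
    rw [mul_zero] at h
    apply h.congr'
    filter_upwards [eventually_ge_atTop 1] with N hN
    rw [div_mul_div_comm, mul_one, hmulself N hN]
  have hmN : Tendsto (fun N : ℕ => (m : ℝ) / N) atTop (nhds 0) := by
    have := tendsto_one_div_atTop_nhds_zero_nat.const_mul (m : ℝ)
    rw [mul_zero] at this
    exact this.congr fun N => by rw [mul_one_div]
  have hrmN : Tendsto (fun N : ℕ => ((r N : ℝ) - m) / N) atTop (nhds 0) := by
    have := hrN.sub hmN
    rw [sub_zero] at this
    exact this.congr fun N => (sub_div _ _ _).symm
  have hpTop : Tendsto p atTop atTop := by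
    apply tendsto_nat_floor_atTop.comp
    apply sqrt_real_atTop.comp
    exact (tendsto_natCast_atTop_atTop (R := ℝ)).const_mul_atTop ha
  have hrTop : Tendsto r atTop atTop := by
    apply tendsto_nat_floor_atTop.comp
    apply sqrt_real_atTop.comp
    exact (tendsto_natCast_atTop_atTop (R := ℝ)).const_mul_atTop hb
  have hEv : ∀ᶠ N in atTop, m ≤ p N ∧ m ≤ r N ∧ p N + r N < N ∧ 1 ≤ N := by
    have h3 : ∀ᶠ N in atTop, (p N : ℝ) / N + (r N : ℝ) / N < 1 := by
      have := hpN.add hrN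
      rw [add_zero] at this
      exact this.eventually (eventually_lt_nhds one_pos)
    filter_upwards [hpTop.eventually_ge_atTop m, hrTop.eventually_ge_atTop m, h3,
      eventually_ge_atTop 1] with N h1 h2 h3 h4
    refine ⟨h1, h2, ?_, h4⟩
    have hN0 : (0 : ℝ) < N := by exact_mod_cast h4
    have hlt : (p N : ℝ) + r N < N := by
      rw [← add_div, div_lt_one hN0] at h3
      exact h3
    exact_mod_cast hlt
  -- the algebraic identity
  have hEq : ∀ᶠ N in atTop,
      ((((p N).descFactorial m : ℝ) * ((r N).descFactorial m : ℝ)) /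
          ((N.descFactorial m : ℝ) * (m.factorial : ℝ))) *
        (((N - r N).descFactorial (p N - m) : ℝ) / ((N - m).descFactorial (p N - m) : ℝ)) =
      (((p N).choose m : ℝ) * ((N - p N).choose (r N - m) : ℝ)) / (N.choose (r N) : ℝ) := by
    filter_upwards [hEv] with N hN
    obtain ⟨h1, h2, h3, h4⟩ := hN
    have hrm_Np : r N - m ≤ N - p N := by omega
    have hr_N : r N ≤ N := by omega
    have hm_N : m ≤ N := by omega
    have hpm_Nr : p N - m ≤ N - r N := by omega
    have hpm_Nm : p N - m ≤ N - m := by omega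
    rw [Nat.cast_choose ℝ h1, Nat.cast_choose ℝ hrm_Np, Nat.cast_choose ℝ hr_N,
      cast_descFactorial_div _ _ h1, cast_descFactorial_div _ _ h2,
      cast_descFactorial_div _ _ hm_N, cast_descFactorial_div _ _ hpm_Nr,
      cast_descFactorial_div _ _ hpm_Nm]
    have e1 : N - m - (p N - m) = N - p N := by omega
    have e2 : N - r N - (p N - m) = N - p N - (r N - m) := by omega
    rw [e1, e2]
    have nz : ∀ k : ℕ, ((k.factorial : ℝ)) ≠ 0 := fun k => by
      exact_mod_cast k.factorial_ne_zero
    field_simp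
  -- limit of the first factor
  have hG1 : Tendsto (fun N => (((p N).descFactorial m : ℝ) * ((r N).descFactorial m : ℝ)) /
      ((N.descFactorial m : ℝ) * (m.factorial : ℝ))) atTop
      (nhds (sl ^ m / (m.factorial : ℝ))) := by
    have hprod : Tendsto (fun N : ℕ => ∏ j ∈ Finset.range m,
        (((p N : ℝ) - j) * ((r N : ℝ) - j) / ((N : ℝ) - j))) atTop (nhds (sl ^ m)) := by
      have := tendsto_finset_prod (Finset.range m)
        (fun j (_ : j ∈ Finset.range m) =>
          key_ratio (Real.sqrt a) (Real.sqrt b) p r hP hR j j _ (sub_const_div_nat j))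
      simpa [Finset.prod_const, Finset.card_range] using this
    have h := hprod.div_const (m.factorial : ℝ)
    apply h.congr'
    filter_upwards [hEv] with N hN
    obtain ⟨h1, h2, h3, h4⟩ := hN
    have hm_N : m ≤ N := by omega
    rw [cast_descFactorial_prod _ _ h1, cast_descFactorial_prod _ _ h2,
      cast_descFactorial_prod _ _ hm_N, Finset.prod_div_distrib,
      Finset.prod_mul_distrib, div_div]
  -- limit of the second factor
  have hdU : Tendsto (fun N : ℕ => ((N : ℝ) - m) / N) atTop (nhds 1) := sub_const_div_nat m
  have hdL : Tendsto (fun N : ℕ => ((N : ℝ) - p N + 1) / N) atTop (nhds 1) := by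
    have h := ((tendsto_const_nhds (x := (1:ℝ))).sub hpN).add tendsto_one_div_atTop_nhds_zero_nat
    rw [sub_zero, add_zero] at h
    apply h.congr'
    filter_upwards [eventually_ge_atTop 1] with N hN
    have hN0 : (N : ℝ) ≠ 0 := by positivity
    field_simp
  have hU : Tendsto (fun N : ℕ => (1 - ((r N : ℝ) - m) / ((N : ℝ) - m)) ^ (p N - m)) atTop
      (nhds (Real.exp (-sl))) := by
    apply pow_tendsto_exp
    · exact div_shift _ _ 0 hrmN hdU
    · have hk := key_ratio (Real.sqrt a) (Real.sqrt b) p r hP hR m m _ hdU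
      apply hk.congr'
      filter_upwards [hEv] with N hN
      rw [Nat.cast_sub hN.1, mul_div_assoc]
    · filter_upwards [hEv] with N hN
      obtain ⟨h1, h2, h3, h4⟩ := hN
      have hmr : (m : ℝ) ≤ r N := by exact_mod_cast h2
      have hmN' : (m : ℝ) < N := by exact_mod_cast (by omega : m < N)
      apply div_nonneg <;> linarith
  have hL : Tendsto (fun N : ℕ => (1 - ((r N : ℝ) - m) / ((N : ℝ) - p N + 1)) ^ (p N - m)) atTop
      (nhds (Real.exp (-sl))) := by
    apply pow_tendsto_exp
    · exact div_shift _ _ 0 hrmN hdL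
    · have hk := key_ratio (Real.sqrt a) (Real.sqrt b) p r hP hR m m _ hdL
      apply hk.congr'
      filter_upwards [hEv] with N hN
      rw [Nat.cast_sub hN.1, mul_div_assoc]
    · filter_upwards [hEv] with N hN
      obtain ⟨h1, h2, h3, h4⟩ := hN
      have hmr : (m : ℝ) ≤ r N := by exact_mod_cast h2
      have hpN' : (p N : ℝ) < N := by exact_mod_cast (by omega : p N < N)
      apply div_nonneg <;> linarith
  have hG2 : Tendsto (fun N => ((N - r N).descFactorial (p N - m) : ℝ) /
      ((N - m).descFactorial (p N - m) : ℝ)) atTop (nhds (Real.exp (-sl))) := by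
    apply tendsto_of_tendsto_of_tendsto_of_le_of_le' hL hU
    · -- lower bound
      filter_upwards [hEv] with N hN
      obtain ⟨h1, h2, h3, h4⟩ := hN
      have hpm_Nr : p N - m ≤ N - r N := by omega
      have hpm_Nm : p N - m ≤ N - m := by omega
      rw [cast_descFactorial_prod _ _ hpm_Nr, cast_descFactorial_prod _ _ hpm_Nm,
        ← Finset.prod_div_distrib]
      have hpow : (1 - ((r N : ℝ) - m) / ((N : ℝ) - p N + 1)) ^ (p N - m) =
          ∏ _j ∈ Finset.range (p N - m), (1 - ((r N : ℝ) - m) / ((N : ℝ) - p N + 1)) := by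
        rw [Finset.prod_const, Finset.card_range]
      rw [hpow]
      apply Finset.prod_le_prod
      · intro j hj
        have hD : (0 : ℝ) < (N : ℝ) - p N + 1 := by
          have : (p N : ℝ) < N := by exact_mod_cast (by omega : p N < N)
          linarith
        have hnum : (0 : ℝ) ≤ ((N : ℝ) - p N + 1) - ((r N : ℝ) - m) := by
          have : (p N : ℝ) + r N < N := by exact_mod_cast h3
          have hm' : (m : ℝ) ≥ 0 := Nat.cast_nonneg m
          linarith
        have : 1 - ((r N : ℝ) - m) / ((N : ℝ) - p N + 1) =
            (((N : ℝ) - p N + 1) - ((r N : ℝ) - m)) / ((N : ℝ) - p N + 1) := by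
          field_simp
        rw [this]
        positivity
      · intro j hj
        rw [Finset.mem_range] at hj
        have hcNr : ((N - r N : ℕ) : ℝ) = (N : ℝ) - r N := Nat.cast_sub (by omega)
        have hcNm : ((N - m : ℕ) : ℝ) = (N : ℝ) - m := Nat.cast_sub (by omega)
        rw [hcNr, hcNm]
        have hjlt : (j : ℝ) ≤ (p N : ℝ) - m - 1 := by
          have h5 : (j : ℝ) + 1 ≤ ((p N - m : ℕ) : ℝ) := by exact_mod_cast hj
          rw [Nat.cast_sub h1] at h5
          linarith
        have hpltN : (p N : ℝ) + r N < N := by exact_mod_cast h3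
        have hmr : (m : ℝ) ≤ r N := by exact_mod_cast h2
        have hmp : (m : ℝ) ≤ p N := by exact_mod_cast h1
        have hD : (0 : ℝ) < (N : ℝ) - p N + 1 := by linarith
        have hBj : (0 : ℝ) < (N : ℝ) - m - j := by linarith
        have hDB : (N : ℝ) - p N + 1 ≤ (N : ℝ) - m - j := by linarith
        have e : 1 - ((r N : ℝ) - m) / ((N : ℝ) - p N + 1) =
            (((N : ℝ) - p N + 1) - ((r N : ℝ) - m)) / ((N : ℝ) - p N + 1) := by
          field_simp
        rw [e, div_le_div_iff₀ hD hBj]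
        have hu0 : (0 : ℝ) ≤ (r N : ℝ) - m := by linarith
        nlinarith [mul_le_mul_of_nonneg_left hDB hu0]
    · -- upper bound
      filter_upwards [hEv] with N hN
      obtain ⟨h1, h2, h3, h4⟩ := hN
      have hpm_Nr : p N - m ≤ N - r N := by omega
      have hpm_Nm : p N - m ≤ N - m := by omega
      rw [cast_descFactorial_prod _ _ hpm_Nr, cast_descFactorial_prod _ _ hpm_Nm,
        ← Finset.prod_div_distrib]
      have hpow : (1 - ((r N : ℝ) - m) / ((N : ℝ) - m)) ^ (p N - m) =
          ∏ _j ∈ Finset.range (p N - m), (1 - ((r N : ℝ) - m) / ((N : ℝ) - m)) := by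
        rw [Finset.prod_const, Finset.card_range]
      rw [hpow]
      apply Finset.prod_le_prod
      · intro j hj
        rw [Finset.mem_range] at hj
        apply div_nonneg
        · have : (j : ℝ) < ((N - r N : ℕ) : ℝ) := by
            exact_mod_cast lt_of_lt_of_le hj hpm_Nr
          linarith
        · have : (j : ℝ) < ((N - m : ℕ) : ℝ) := by
            exact_mod_cast lt_of_lt_of_le hj hpm_Nm
          linarith
      · intro j hj
        rw [Finset.mem_range] at hj
        have hcNr : ((N - r N : ℕ) : ℝ) = (N : ℝ) - r N := Nat.cast_sub (by omega)
        have hcNm : ((N - m : ℕ) : ℝ) = (N : ℝ) - m := Nat.cast_sub (by omega)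
        rw [hcNr, hcNm]
        have hjlt : (j : ℝ) ≤ (p N : ℝ) - m - 1 := by
          have h5 : (j : ℝ) + 1 ≤ ((p N - m : ℕ) : ℝ) := by exact_mod_cast hj
          rw [Nat.cast_sub h1] at h5
          linarith
        have hpltN : (p N : ℝ) + r N < N := by exact_mod_cast h3
        have hmr : (m : ℝ) ≤ r N := by exact_mod_cast h2
        have hmp : (m : ℝ) ≤ p N := by exact_mod_cast h1
        have hBj : (0 : ℝ) < (N : ℝ) - m - j := by linarith
        have hB : (0 : ℝ) < (N : ℝ) - m := by linarith
        have e : 1 - ((r N : ℝ) - m) / ((N : ℝ) - m) = ((N : ℝ) - r N) / ((N : ℝ) - m) := by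
          field_simp
          ring
        rw [e, div_le_div_iff₀ hBj hB]
        have hj0 : (0 : ℝ) ≤ j := Nat.cast_nonneg j
        nlinarith
  -- combine
  rw [hab]
  have hfinal := hG1.mul hG2
  exact hfinal.congr' hEq
end

section
/- Fix a real λ > 0 and a real number t, and for each N set p_N = ⌊√(λ·N)⌋. Then the limit as N → ∞ of (1 / (N choose p_N)²) · Σ_{I,J} t^(|I ∩ J|) — the sum ranging over all ordered pairs (I, J) of p_N-element subsets of Fin N — exists and equals e^(λ·(t − 1)). In particular, for t = −1 this limit equals e^(−2λ), the weight q = e^(−2λ) assigned to a crossing of two chords in the Majorana double-scaled SYK model. -/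
open Finset Filter Topology

noncomputable def chordP (lam : ℝ) (N : ℕ) : ℕ := ⌊Real.sqrt (lam * N)⌋₊

section
variable {lam : ℝ} (hlam : 0 < lam)

lemma chordP_le (N : ℕ) : (chordP lam N : ℝ) ≤ Real.sqrt (lam * N) :=
  Nat.floor_le (Real.sqrt_nonneg _)

lemma chordP_lt (N : ℕ) : Real.sqrt (lam * N) < chordP lam N + 1 :=
  Nat.lt_floor_add_one _

include hlam

lemma chordP_sq_le (N : ℕ) : (chordP lam N : ℝ) ^ 2 ≤ lam * N := by
  have h := chordP_le (lam := lam) N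
  have h2 : (Real.sqrt (lam * N)) ^ 2 = lam * N :=
    Real.sq_sqrt (by positivity)
  nlinarith [Nat.cast_nonneg (α := ℝ) (chordP lam N)]

lemma tendsto_sqrt_div : Tendsto (fun N : ℕ => Real.sqrt (lam * N) / N) atTop (𝓝 0) := by
  have h1 : Tendsto (fun N : ℕ => lam / N) atTop (𝓝 0) :=
    tendsto_const_div_atTop_nhds_zero_nat lam
  have h2 : Tendsto (fun N : ℕ => Real.sqrt (lam / N)) atTop (𝓝 0) := by
    have := (Real.continuous_sqrt.tendsto' 0 0 Real.sqrt_zero).comp h1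
    exact this
  refine h2.congr' ?_
  filter_upwards [eventually_ge_atTop 1] with N hN
  have hN0 : (0 : ℝ) < N := by exact_mod_cast hN
  rw [eq_div_iff hN0.ne']
  rw [← Real.sqrt_sq hN0.le, ← Real.sqrt_mul (by positivity)]
  congr 1
  field_simp
  ring_nf
  rw [Real.sq_sqrt (by positivity)]

lemma tendsto_chordP_div : Tendsto (fun N : ℕ => (chordP lam N : ℝ) / N) atTop (𝓝 0) := by
  apply tendsto_of_tendsto_of_tendsto_of_le_of_le' tendsto_const_nhds (tendsto_sqrt_div hlam)
  · exact Eventually.of_forall fun N => by positivity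
  · filter_upwards [eventually_ge_atTop 1] with N hN
    have hN0 : (0 : ℝ) < N := by exact_mod_cast hN
    exact (div_le_div_iff_of_pos_right hN0).2 (chordP_le N)

lemma tendsto_chordP_sq_div :
    Tendsto (fun N : ℕ => (chordP lam N : ℝ) ^ 2 / N) atTop (𝓝 lam) := by
  have hlow : Tendsto (fun N : ℕ => lam - 2 * (Real.sqrt (lam * N) / N)) atTop (𝓝 lam) := by
    have := (tendsto_sqrt_div hlam).const_mul 2
    simpa using tendsto_const_nhds.sub this
  apply tendsto_of_tendsto_of_tendsto_of_le_of_le' hlow tendsto_const_nhds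
  · have h1 : Tendsto (fun N : ℕ => lam * N) atTop atTop :=
      (tendsto_natCast_atTop_atTop).const_mul_atTop hlam
    filter_upwards [h1.eventually_ge_atTop 1, eventually_ge_atTop 1] with N h1N hN
    have hN0 : (0 : ℝ) < N := by exact_mod_cast hN
    have hs1 : 1 ≤ Real.sqrt (lam * N) := by
      rw [show (1:ℝ) = Real.sqrt 1 by simp]
      exact Real.sqrt_le_sqrt h1N
    have hlt := chordP_lt (lam := lam) N
    have hsq : (Real.sqrt (lam * N)) ^ 2 = lam * N := Real.sq_sqrt (by positivity)
    have hp : Real.sqrt (lam * N) - 1 ≤ (chordP lam N : ℝ) := by linarith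
    have hp0 : (0:ℝ) ≤ Real.sqrt (lam * N) - 1 := by linarith
    have : lam * N - 2 * Real.sqrt (lam * N) ≤ (chordP lam N : ℝ) ^ 2 := by
      nlinarith
    rw [le_div_iff₀ hN0]
    have : lam * N - 2 * Real.sqrt (lam * N) ≥
        (lam - 2 * (Real.sqrt (lam * N) / N)) * N := by
      field_simp
      exact le_refl _
    nlinarith
  · filter_upwards [eventually_ge_atTop 1] with N hN
    have hN0 : (0 : ℝ) < N := by exact_mod_cast hN
    rw [div_le_iff₀ hN0]
    have := chordP_sq_le hlam N
    linarith

lemma tendsto_chordP_atTop : Tendsto (chordP lam) atTop atTop := by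
  rw [tendsto_atTop]
  intro b
  have h1 : Tendsto (fun N : ℕ => lam * N) atTop atTop :=
    (tendsto_natCast_atTop_atTop).const_mul_atTop hlam
  filter_upwards [h1.eventually_ge_atTop ((b : ℝ) ^ 2)] with N hN
  apply Nat.le_floor
  rw [show ((b:ℕ):ℝ) = Real.sqrt ((b:ℝ)^2) by rw [Real.sqrt_sq (Nat.cast_nonneg b)]]
  exact Real.sqrt_le_sqrt hN
end

section
variable {lam : ℝ} (hlam : 0 < lam)

lemma div_div_cancel_aux (x y N : ℝ) (hN : N ≠ 0) : (x / N) / (y / N) = x / y := by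
  rcases eq_or_ne y 0 with rfl | hy
  · simp
  · field_simp

include hlam

lemma tendsto_chord_ratio (m : ℕ) :
    Tendsto (fun N : ℕ => ((chordP lam N : ℝ) - m) ^ 2 / ((N : ℝ) - 2 * chordP lam N + m + 1))
      atTop (𝓝 lam) := by
  have hnum : Tendsto (fun N : ℕ => ((chordP lam N : ℝ) - m) ^ 2 / N) atTop (𝓝 lam) := by
    have ha : Tendsto (fun N : ℕ => (2 * (m:ℝ)) * ((chordP lam N : ℝ) / N)) atTop
        (𝓝 ((2 * (m:ℝ)) * 0)) := (tendsto_chordP_div hlam).const_mul _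
    have h := ((tendsto_chordP_sq_div hlam).sub ha).add
        (tendsto_const_div_atTop_nhds_zero_nat ((m:ℝ) ^ 2))
    simp only [add_zero, mul_zero, sub_zero] at h
    refine h.congr fun N => ?_
    ring
  have hden : Tendsto (fun N : ℕ => ((N : ℝ) - 2 * chordP lam N + m + 1) / N) atTop (𝓝 1) := by
    have ha : Tendsto (fun N : ℕ => (2:ℝ) * ((chordP lam N : ℝ) / N)) atTop
        (𝓝 ((2:ℝ) * 0)) := (tendsto_chordP_div hlam).const_mul _
    have h := ((tendsto_const_nhds (x := (1:ℝ))).sub ha).add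
        (tendsto_const_div_atTop_nhds_zero_nat ((m:ℝ) + 1))
    simp only [mul_zero, sub_zero, add_zero] at h
    refine h.congr' ?_
    filter_upwards [eventually_ge_atTop 1] with N hN
    have hN0 : (0 : ℝ) < N := by exact_mod_cast hN
    field_simp
    ring
  have h := hnum.div hden one_ne_zero
  simp only [div_one] at h
  refine h.congr' ?_
  filter_upwards [eventually_ge_atTop 1] with N hN
  have hN0 : (0 : ℝ) < N := by exact_mod_cast hN
  simp only [Pi.div_apply]
  rw [div_div_cancel_aux _ _ _ hN0.ne']
end

section
variable {lam : ℝ} (hlam : 0 < lam)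
include hlam

lemma tendsto_one_sub_pow (a : ℕ → ℝ) (ha : Tendsto a atTop (𝓝 0))
    (hnn : ∀ᶠ N in atTop, 0 ≤ a N)
    (hpa : Tendsto (fun N => (chordP lam N : ℝ) * a N) atTop (𝓝 lam)) :
    Tendsto (fun N => (1 - a N) ^ chordP lam N) atTop (𝓝 (Real.exp (-lam))) := by
  have hhalf : ∀ᶠ N in atTop, a N < 1/2 :=
    ha.eventually (eventually_lt_nhds (by norm_num))
  have hlog : Tendsto (fun N => (chordP lam N : ℝ) * Real.log (1 - a N)) atTop (𝓝 (-lam)) := by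
    have hup : Tendsto (fun N => -((chordP lam N : ℝ) * a N)) atTop (𝓝 (-lam)) := hpa.neg
    have hlo : Tendsto (fun N => -((chordP lam N : ℝ) * a N) * (1 - a N)⁻¹) atTop
        (𝓝 (-lam)) := by
      have hi : Tendsto (fun N => (1 - a N)⁻¹) atTop (𝓝 1) := by
        have := ((tendsto_const_nhds (x := (1:ℝ))).sub ha).inv₀ (by norm_num)
        simpa using this
      simpa using hpa.neg.mul hi
    apply tendsto_of_tendsto_of_tendsto_of_le_of_le' hlo hup
    · filter_upwards [hhalf, hnn] with N h1 h2
      have hpos : (0:ℝ) < 1 - a N := by linarith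
      have hlb : 1 - (1 - a N)⁻¹ ≤ Real.log (1 - a N) := by
        have := Real.log_le_sub_one_of_pos (inv_pos.2 hpos)
        rw [Real.log_inv] at this
        linarith
      have heq : -(a N) * (1 - a N)⁻¹ = 1 - (1 - a N)⁻¹ := by
        field_simp
        ring
      have : -(a N) * (1 - a N)⁻¹ ≤ Real.log (1 - a N) := heq ▸ hlb
      have := mul_le_mul_of_nonneg_left this (Nat.cast_nonneg (α := ℝ) (chordP lam N))
      calc -((chordP lam N : ℝ) * a N) * (1 - a N)⁻¹
          = (chordP lam N : ℝ) * (-(a N) * (1 - a N)⁻¹) := by ring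
        _ ≤ _ := ‹_›
    · filter_upwards [hhalf, hnn] with N h1 h2
      have hpos : (0:ℝ) < 1 - a N := by linarith
      have hub : Real.log (1 - a N) ≤ -(a N) := by
        have := Real.log_le_sub_one_of_pos hpos
        linarith
      have := mul_le_mul_of_nonneg_left hub (Nat.cast_nonneg (α := ℝ) (chordP lam N))
      linarith [this]
  have := (Real.continuous_exp.tendsto _).comp hlog
  refine this.congr' ?_
  filter_upwards [hhalf, hnn] with N h1 h2
  have hpos : (0:ℝ) < 1 - a N := by linarith
  simp only [Function.comp_apply]
  rw [Real.exp_nat_mul, Real.exp_log hpos]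
end

lemma chordQ0_prod {N p : ℕ} (h2p : 2 * p ≤ N) :
    ((N - p).choose p : ℝ) / (N.choose p)
      = ∏ i ∈ Finset.range p, (((N:ℝ) - p - i) / ((N:ℝ) - i)) := by
  have hpN : p ≤ N := by omega
  have hfac : (0:ℝ) < p.factorial := by exact_mod_cast p.factorial_pos
  calc ((N - p).choose p : ℝ) / (N.choose p)
      = ((N - p).descFactorial p : ℝ) / (N.descFactorial p) := by
        rw [Nat.descFactorial_eq_factorial_mul_choose, Nat.descFactorial_eq_factorial_mul_choose]
        push_cast
        rw [mul_div_mul_left _ _ hfac.ne']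
    _ = ∏ i ∈ Finset.range p, (((N:ℝ) - p - i) / ((N:ℝ) - i)) := by
        rw [Nat.descFactorial_eq_prod_range, Nat.descFactorial_eq_prod_range]
        push_cast
        rw [← Finset.prod_div_distrib]
        refine Finset.prod_congr rfl fun i hi => ?_
        rw [Finset.mem_range] at hi
        have e1 : (N - p - i : ℕ) = N - (p + i) := by omega
        rw [e1, Nat.cast_sub (by omega), Nat.cast_sub (by omega)]
        push_cast
        ring_nf

lemma chordQ0_bounds {N p : ℕ} (h2p : 2 * p ≤ N) (hN : 1 ≤ N) :
    (1 - (p:ℝ) / ((N:ℝ) - p + 1)) ^ p ≤ ((N - p).choose p : ℝ) / (N.choose p) ∧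
      ((N - p).choose p : ℝ) / (N.choose p) ≤ (1 - (p:ℝ) / N) ^ p := by
  have hN0 : (0:ℝ) < N := by exact_mod_cast hN
  have h2p' : (2:ℝ) * p ≤ N := by exact_mod_cast h2p
  have hp0 : (0:ℝ) ≤ p := Nat.cast_nonneg p
  rw [chordQ0_prod h2p]
  constructor
  · have e : (1 - (p:ℝ) / ((N:ℝ) - p + 1)) ^ p = ∏ _i ∈ Finset.range p,
        (1 - (p:ℝ) / ((N:ℝ) - p + 1)) := by rw [Finset.prod_const, Finset.card_range]
    rw [e]
    apply Finset.prod_le_prod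
    · intro i hi
      have hden : (0:ℝ) < (N:ℝ) - p + 1 := by linarith
      rw [sub_nonneg, div_le_one hden]
      linarith
    · intro i hi
      rw [Finset.mem_range] at hi
      have hi' : (i:ℝ) ≤ (p:ℝ) - 1 := by
        have : (i:ℝ) + 1 ≤ p := by exact_mod_cast hi
        linarith
      have hden : (0:ℝ) < (N:ℝ) - p + 1 := by linarith
      have hden2 : (0:ℝ) < (N:ℝ) - i := by linarith
      rw [sub_div' hden.ne', div_le_div_iff₀ hden hden2]
      nlinarith
  · have e : (1 - (p:ℝ) / N) ^ p = ∏ _i ∈ Finset.range p, (1 - (p:ℝ) / N) := by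
      rw [Finset.prod_const, Finset.card_range]
    rw [e]
    apply Finset.prod_le_prod
    · intro i hi
      rw [Finset.mem_range] at hi
      have hi' : (i:ℝ) ≤ (p:ℝ) - 1 := by
        have : (i:ℝ) + 1 ≤ p := by exact_mod_cast hi
        linarith
      have hden2 : (0:ℝ) < (N:ℝ) - i := by linarith
      apply div_nonneg _ hden2.le
      linarith
    · intro i hi
      rw [Finset.mem_range] at hi
      have hi' : (i:ℝ) ≤ (p:ℝ) - 1 := by
        have : (i:ℝ) + 1 ≤ p := by exact_mod_cast hi
        linarith
      have hden2 : (0:ℝ) < (N:ℝ) - i := by linarith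
      have : 1 - (p:ℝ) / N = ((N:ℝ) - p) / N := by field_simp
      rw [this, div_le_div_iff₀ hden2 hN0]
      nlinarith

lemma fiber_card {N p m : ℕ} (I : Finset (Fin N)) (hI : I.card = p) (hm : m ≤ p) :
    ((Finset.univ.powersetCard p).filter (fun J => (I ∩ J).card = m)).card
      = p.choose m * (N - p).choose (p - m) := by
  have hcard : ((I.powersetCard m) ×ˢ (Iᶜ.powersetCard (p - m))).card
      = p.choose m * (N - p).choose (p - m) := by
    rw [Finset.card_product, Finset.card_powersetCard, Finset.card_powersetCard, hI,
      Finset.card_compl, hI, Fintype.card_fin]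
  rw [← hcard]
  apply Finset.card_bij' (fun J _ => (I ∩ J, J \ I)) (fun AB _ => AB.1 ∪ AB.2)
  · intro J hJ
    simp only [Finset.mem_filter, Finset.mem_powersetCard_univ] at hJ
    obtain ⟨hJp, hJm⟩ := hJ
    simp only [Finset.mem_product, Finset.mem_powersetCard]
    refine ⟨⟨Finset.inter_subset_left, hJm⟩, ?_, ?_⟩
    · intro x hx
      simp only [Finset.mem_compl]
      intro hxI
      exact (Finset.mem_sdiff.1 hx).2 hxI
    · have := Finset.card_inter_add_card_sdiff J I
      rw [Finset.inter_comm] at this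
      omega
  · intro AB hAB
    simp only [Finset.mem_product, Finset.mem_powersetCard] at hAB
    obtain ⟨⟨hA, hAm⟩, hB, hBm⟩ := hAB
    have hd : Disjoint AB.1 AB.2 := by
      refine Finset.disjoint_left.2 fun x hx1 hx2 => ?_
      exact (Finset.mem_compl.1 (hB hx2)) (hA hx1)
    have hcard : (AB.1 ∪ AB.2).card = p := by
      rw [Finset.card_union_of_disjoint hd, hAm, hBm]; omega
    simp only [Finset.mem_filter, Finset.mem_powersetCard_univ]
    refine ⟨hcard, ?_⟩
    have : I ∩ (AB.1 ∪ AB.2) = AB.1 := by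
      ext x
      simp only [Finset.mem_inter, Finset.mem_union]
      constructor
      · rintro ⟨hxI, hx1 | hx2⟩
        · exact hx1
        · exact absurd hxI (Finset.mem_compl.1 (hB hx2))
      · intro hx1; exact ⟨hA hx1, Or.inl hx1⟩
    rw [this, hAm]
  · intro J hJ
    simp only [Finset.mem_filter, Finset.mem_powersetCard_univ] at hJ
    ext x
    simp only [Finset.mem_union, Finset.mem_inter, Finset.mem_sdiff]
    tauto
  · intro AB hAB
    simp only [Finset.mem_product, Finset.mem_powersetCard] at hAB
    obtain ⟨⟨hA, hAm⟩, hB, hBm⟩ := hAB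
    have h1 : I ∩ (AB.1 ∪ AB.2) = AB.1 := by
      ext x
      simp only [Finset.mem_inter, Finset.mem_union]
      constructor
      · rintro ⟨hxI, hx1 | hx2⟩
        · exact hx1
        · exact absurd hxI (Finset.mem_compl.1 (hB hx2))
      · intro hx1; exact ⟨hA hx1, Or.inl hx1⟩
    have h2 : (AB.1 ∪ AB.2) \ I = AB.2 := by
      ext x
      simp only [Finset.mem_sdiff, Finset.mem_union]
      constructor
      · rintro ⟨hx1 | hx2, hxI⟩
        · exact absurd (hA hx1) hxI
        · exact hx2
      · intro hx2; exact ⟨Or.inr hx2, Finset.mem_compl.1 (hB hx2)⟩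
    rw [h1, h2]
lemma chord_inner_sum {N p : ℕ} (t : ℝ) (I : Finset (Fin N)) (hI : I.card = p) :
    ∑ J ∈ Finset.univ.powersetCard p, t ^ (I ∩ J).card
      = ∑ m ∈ Finset.range (p + 1), (p.choose m * (N - p).choose (p - m) : ℕ) * t ^ m := by
  rw [← Finset.sum_fiberwise_of_maps_to (g := fun J => (I ∩ J).card)
      (t := Finset.range (p + 1)) ?_ (fun J => t ^ (I ∩ J).card)]
  · refine Finset.sum_congr rfl fun m hm => ?_
    rw [Finset.mem_range] at hm
    have : ∀ J ∈ (Finset.univ.powersetCard p).filter (fun J => (I ∩ J).card = m),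
        t ^ (I ∩ J).card = t ^ m := by
      intro J hJ
      rw [(Finset.mem_filter.1 hJ).2]
    rw [Finset.sum_congr rfl this, Finset.sum_const,
      fiber_card I hI (by omega), nsmul_eq_mul]
  · intro J hJ
    rw [Finset.mem_powersetCard_univ] at hJ
    simp only [Finset.mem_range]
    have h2 : (I ∩ J).card ≤ I.card := Finset.card_le_card Finset.inter_subset_left
    omega

lemma total_sum {N p : ℕ} (t : ℝ) :
    ∑ I ∈ Finset.univ.powersetCard p, ∑ J ∈ (Finset.univ : Finset (Fin N)).powersetCard p,
        t ^ (I ∩ J).card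
      = (N.choose p : ℝ) *
        ∑ m ∈ Finset.range (p + 1), (p.choose m * (N - p).choose (p - m) : ℕ) * t ^ m := by
  have : ∀ I ∈ (Finset.univ : Finset (Fin N)).powersetCard p,
      ∑ J ∈ Finset.univ.powersetCard p, t ^ (I ∩ J).card
        = ∑ m ∈ Finset.range (p + 1), (p.choose m * (N - p).choose (p - m) : ℕ) * t ^ m := by
    intro I hI
    exact chord_inner_sum t I (Finset.mem_powersetCard_univ.1 hI)
  rw [Finset.sum_congr rfl this, Finset.sum_const, nsmul_eq_mul, Finset.card_powersetCard,
    Finset.card_univ, Fintype.card_fin]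

section
variable {lam : ℝ} (hlam : 0 < lam)
include hlam

lemma eventually_mul_le (k : ℕ) : ∀ᶠ N in atTop, k * chordP lam N ≤ N := by
  have hev := (tendsto_chordP_div hlam).eventually
    (eventually_lt_nhds (show (0:ℝ) < 1 / (k + 1) by positivity))
  filter_upwards [hev, eventually_ge_atTop 1] with N h1 hN
  have hN0 : (0:ℝ) < N := by exact_mod_cast hN
  have h2 : ((chordP lam N : ℝ)) * (k + 1) < N := by
    rw [div_lt_div_iff₀ hN0 (by positivity)] at h1
    linarith
  have h3 : (k * chordP lam N : ℝ) ≤ N := by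
    have := Nat.cast_nonneg (α := ℝ) (chordP lam N)
    nlinarith
  exact_mod_cast h3

lemma tendsto_chordQ0 :
    Tendsto (fun N : ℕ => ((N - chordP lam N).choose (chordP lam N) : ℝ) / (N.choose (chordP lam N)))
      atTop (𝓝 (Real.exp (-lam))) := by
  have hub : Tendsto (fun N : ℕ => (1 - (chordP lam N : ℝ) / N) ^ chordP lam N) atTop
      (𝓝 (Real.exp (-lam))) := by
    apply tendsto_one_sub_pow hlam _ (tendsto_chordP_div hlam)
    · exact Eventually.of_forall fun N => by positivity
    · refine (tendsto_chordP_sq_div hlam).congr fun N => ?_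
      ring
  have hden : Tendsto (fun N : ℕ => ((N:ℝ) - chordP lam N + 1) / N) atTop (𝓝 1) := by
    have ha : Tendsto (fun N : ℕ => (1:ℝ) - (chordP lam N : ℝ) / N + 1 / N) atTop
        (𝓝 (1 - 0 + 0)) :=
      (tendsto_const_nhds.sub (tendsto_chordP_div hlam)).add
        (tendsto_const_div_atTop_nhds_zero_nat 1)
    simp only [sub_zero, add_zero] at ha
    refine ha.congr' ?_
    filter_upwards [eventually_ge_atTop 1] with N hN
    have hN0 : (0:ℝ) < N := by exact_mod_cast hN
    field_simp
  have hlb : Tendsto (fun N : ℕ =>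
      (1 - (chordP lam N : ℝ) / ((N:ℝ) - chordP lam N + 1)) ^ chordP lam N) atTop
      (𝓝 (Real.exp (-lam))) := by
    apply tendsto_one_sub_pow hlam
    · have h := (tendsto_chordP_div hlam).div hden one_ne_zero
      simp only [div_one] at h
      refine h.congr' ?_
      filter_upwards [eventually_ge_atTop 1] with N hN
      have hN0 : (0:ℝ) < N := by exact_mod_cast hN
      simp only [Pi.div_apply]
      rw [div_div_cancel_aux _ _ _ hN0.ne']
    · filter_upwards [eventually_mul_le hlam 2] with N h2p
      have h2 : (2 * chordP lam N : ℝ) ≤ N := by exact_mod_cast h2p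
      have h0 : (0:ℝ) ≤ chordP lam N := Nat.cast_nonneg _
      push_cast at h2
      apply div_nonneg h0
      linarith
    · have h := (tendsto_chordP_sq_div hlam).div hden one_ne_zero
      simp only [div_one] at h
      refine h.congr' ?_
      filter_upwards [eventually_ge_atTop 1] with N hN
      have hN0 : (0:ℝ) < N := by exact_mod_cast hN
      simp only [Pi.div_apply]
      rw [div_div_cancel_aux _ _ _ hN0.ne']
      ring
  apply tendsto_of_tendsto_of_tendsto_of_le_of_le' hlb hub
  · filter_upwards [eventually_mul_le hlam 2, eventually_ge_atTop 1] with N h2p hN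
    exact (chordQ0_bounds h2p hN).1
  · filter_upwards [eventually_mul_le hlam 2, eventually_ge_atTop 1] with N h2p hN
    exact (chordQ0_bounds h2p hN).2
end

noncomputable def chordQ (lam : ℝ) (N m : ℕ) : ℝ :=
  ((chordP lam N).choose m * (N - chordP lam N).choose (chordP lam N - m) : ℕ) /
    (N.choose (chordP lam N))

lemma chordQ_succ_aux {N p m : ℕ} (hm : m < p) (h2p : 2 * p ≤ N) :
    ((p.choose (m+1) * (N-p).choose (p-(m+1)) : ℕ) : ℝ) / (N.choose p)
      = (((p.choose m * (N-p).choose (p-m) : ℕ) : ℝ) / (N.choose p)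
          * (((p:ℝ) - m)^2 / ((N:ℝ) - 2*p + m + 1))) / (m+1) := by
  have hpN : p ≤ N := by omega
  have hC : (0:ℝ) < N.choose p := by exact_mod_cast Nat.choose_pos hpN
  have h2p' : (2*p : ℝ) ≤ N := by exact_mod_cast h2p
  have hden : (0:ℝ) < (N:ℝ) - 2*p + m + 1 := by
    have hm0 : (0:ℝ) ≤ m := Nat.cast_nonneg m
    linarith
  have A : p.choose (m+1) * (m+1) = p.choose m * (p - m) := Nat.choose_succ_right_eq p m
  have B : (N-p).choose (p-m) * (p-m) = (N-p).choose (p-m-1) * (N - 2*p + (m+1)) := by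
    have hB := Nat.choose_succ_right_eq (N-p) (p-m-1)
    have e : p - m - 1 + 1 = p - m := by omega
    have e2 : N - p - (p - m - 1) = N - 2*p + (m+1) := by omega
    rw [e, e2] at hB
    exact hB
  have hA : (p.choose (m+1) : ℝ) * (m+1) = (p.choose m : ℝ) * ((p:ℝ) - m) := by
    have := congrArg (Nat.cast : ℕ → ℝ) A
    push_cast [Nat.cast_sub hm.le] at this
    linarith
  have hB : ((N-p).choose (p-m) : ℝ) * ((p:ℝ) - m)
      = ((N-p).choose (p-m-1) : ℝ) * ((N:ℝ) - 2*p + m + 1) := by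
    have := congrArg (Nat.cast : ℕ → ℝ) B
    push_cast [Nat.cast_sub hm.le, Nat.cast_sub h2p] at this
    linarith
  have e3 : p - (m+1) = p - m - 1 := by omega
  have key : (p.choose (m+1) : ℝ) * ((N-p).choose (p-m-1)) * (((m:ℝ)+1) * ((N:ℝ)-2*p+m+1))
      = ((p.choose m : ℝ) * ((N-p).choose (p-m))) * ((p:ℝ)-m)^2 := by
    linear_combination (((N-p).choose (p-m-1) : ℝ) * ((N:ℝ)-2*p+m+1)) * hA
      - ((p.choose m : ℝ) * ((p:ℝ)-m)) * hB
  rw [e3]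
  push_cast
  rw [div_mul_div_comm, div_div, div_eq_div_iff hC.ne'
    (mul_ne_zero (mul_ne_zero hC.ne' hden.ne') (by positivity))]
  linear_combination (N.choose p : ℝ) * key

lemma chordQ_succ {lam : ℝ} {N m : ℕ} (hm : m < chordP lam N) (h2p : 2 * chordP lam N ≤ N) :
    chordQ lam N (m+1)
      = (chordQ lam N m * (((chordP lam N : ℝ) - m)^2 / ((N:ℝ) - 2*chordP lam N + m + 1)))
          / (m+1) := by
  unfold chordQ
  exact chordQ_succ_aux hm h2p

section
variable {lam : ℝ} (hlam : 0 < lam)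
include hlam

lemma tendsto_chordQ (m : ℕ) :
    Tendsto (fun N => chordQ lam N m) atTop
      (𝓝 (lam ^ m / m.factorial * Real.exp (-lam))) := by
  induction m with
  | zero =>
    have h := tendsto_chordQ0 hlam
    simp only [pow_zero, Nat.factorial_zero, Nat.cast_one, div_one, one_mul]
    refine h.congr fun N => ?_
    simp [chordQ]
  | succ m ih =>
    have h := (ih.mul (tendsto_chord_ratio hlam m)).div_const ((m:ℝ)+1)
    have hval : lam ^ m / m.factorial * Real.exp (-lam) * lam / ((m:ℝ)+1)
        = lam ^ (m+1) / (m+1).factorial * Real.exp (-lam) := by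
      rw [Nat.factorial_succ]
      have h1 : ((m.factorial : ℝ)) ≠ 0 := by exact_mod_cast m.factorial_ne_zero
      have h2 : ((m:ℝ)+1) ≠ 0 := by positivity
      field_simp
      push_cast
      ring
    rw [← hval]
    refine h.congr' ?_
    filter_upwards [(tendsto_chordP_atTop hlam).eventually_gt_atTop m,
      eventually_mul_le hlam 2] with N hm h2p
    rw [chordQ_succ hm h2p]

lemma chordQ_bound : ∀ᶠ N in atTop, ∀ m, chordQ lam N m ≤ (2*lam)^m / m.factorial := by
  filter_upwards [eventually_mul_le hlam 4, eventually_ge_atTop 1] with N h4p hN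
  have h2p : 2 * chordP lam N ≤ N := by omega
  have hpN : chordP lam N ≤ N := by omega
  have hC : (0:ℝ) < N.choose (chordP lam N) := by
    exact_mod_cast Nat.choose_pos hpN
  have hsq : (chordP lam N : ℝ)^2 ≤ lam * N := chordP_sq_le hlam N
  have h4p' : (4 * chordP lam N : ℝ) ≤ N := by exact_mod_cast h4p
  intro m
  induction m with
  | zero =>
    simp only [pow_zero, Nat.factorial_zero, Nat.cast_one, div_one]
    have : chordQ lam N 0 = ((N - chordP lam N).choose (chordP lam N) : ℝ)
        / (N.choose (chordP lam N)) := by simp [chordQ]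
    rw [this, div_le_one hC]
    exact_mod_cast Nat.choose_le_choose (chordP lam N) (Nat.sub_le N _)
  | succ m ih =>
    by_cases hm : m < chordP lam N
    · rw [chordQ_succ hm h2p]
      have hm' : (m:ℝ) < chordP lam N := by exact_mod_cast hm
      have hm0 : (0:ℝ) ≤ m := Nat.cast_nonneg m
      have hden : (0:ℝ) < (N:ℝ) - 2*chordP lam N + m + 1 := by
        have : (0:ℝ) ≤ chordP lam N := Nat.cast_nonneg _
        push_cast at h4p'
        linarith
      have hq0 : 0 ≤ chordQ lam N m := by
        unfold chordQ
        positivity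
      have hr : ((chordP lam N : ℝ) - m)^2 / ((N:ℝ) - 2*chordP lam N + m + 1) ≤ 2*lam := by
        rw [div_le_iff₀ hden]
        push_cast at h4p'
        nlinarith
      have hmul : chordQ lam N m * (((chordP lam N : ℝ) - m)^2 / ((N:ℝ) - 2*chordP lam N + m + 1))
          ≤ (2*lam)^m / m.factorial * (2*lam) := by
        apply mul_le_mul ih hr (by positivity) (by positivity)
      have hstep := (div_le_div_iff_of_pos_right
        (show (0:ℝ) < (m:ℝ)+1 by positivity)).2 hmul
      refine hstep.trans (le_of_eq ?_)
      rw [Nat.factorial_succ]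
      have h1 : ((m.factorial : ℝ)) ≠ 0 := by exact_mod_cast m.factorial_ne_zero
      have h2 : ((m:ℝ)+1) ≠ 0 := by positivity
      field_simp
      push_cast
      ring
    · have hz : (chordP lam N).choose (m+1) = 0 := Nat.choose_eq_zero_of_lt (by omega)
      have : chordQ lam N (m+1) = 0 := by simp [chordQ, hz]
      rw [this]
      positivity
end

section
variable {lam t : ℝ} (hlam : 0 < lam)

lemma chord_tsum_exp :
    ∑' m : ℕ, lam ^ m / m.factorial * Real.exp (-lam) * t ^ m = Real.exp (lam * (t - 1)) := by
  have h1 : ∀ m : ℕ, lam ^ m / m.factorial * Real.exp (-lam) * t ^ m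
      = (lam * t) ^ m / m.factorial * Real.exp (-lam) := fun m => by
    rw [mul_pow]; ring
  rw [tsum_congr h1, tsum_mul_right]
  have h2 : ∑' m : ℕ, (lam * t) ^ m / (m.factorial : ℝ) = Real.exp (lam * t) := by
    rw [Real.exp_eq_exp_ℝ, NormedSpace.exp_eq_tsum_div]
  rw [h2, ← Real.exp_add]
  ring_nf

include hlam

lemma chord_tsum_tendsto :
    Tendsto (fun N => ∑' m : ℕ, chordQ lam N m * t ^ m) atTop
      (𝓝 (Real.exp (lam * (t - 1)))) := by
  rw [← chord_tsum_exp (lam := lam) (t := t)]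
  refine tendsto_tsum_of_dominated_convergence
    (f := fun (N : ℕ) (m : ℕ) => chordQ lam N m * t ^ m)
    (g := fun m => lam ^ m / m.factorial * Real.exp (-lam) * t ^ m)
    (bound := fun m => (2 * lam * |t|) ^ m / m.factorial)
    (Real.summable_pow_div_factorial _)
    (fun m => (tendsto_chordQ hlam m).mul_const _) ?_
  filter_upwards [chordQ_bound hlam] with N hb m
  have hq0 : 0 ≤ chordQ lam N m := by unfold chordQ; positivity
  rw [Real.norm_eq_abs, abs_mul, abs_of_nonneg hq0, abs_pow]
  calc chordQ lam N m * |t| ^ m ≤ (2*lam)^m / m.factorial * |t| ^ m := by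
        apply mul_le_mul_of_nonneg_right (hb m) (by positivity)
    _ = (2 * lam * |t|) ^ m / m.factorial := by
        rw [mul_pow]
        ring
end

/-- In the double scaling limit (`p_N = ⌊√(λN)⌋`, `N → ∞`), the normalized weighted sum
`Σ_{I,J} t^(|I ∩ J|) / (N choose p_N)²` over ordered pairs of `p_N`-element subsets of
`Fin N` tends to `e^(λ(t−1))`.  (For `t = −1` this is the crossing weight `q = e^(−2λ)`
of the Majorana double-scaled SYK model.) -/
theorem chord_pair_weight_limit (lam t : ℝ) (hlam : 0 < lam) :
    Filter.Tendsto
      (fun N : ℕ =>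
        let p := ⌊Real.sqrt (lam * N)⌋₊
        let S := (Finset.univ : Finset (Fin N)).powersetCard p
        (∑ I ∈ S, ∑ J ∈ S, t ^ (I ∩ J).card) / (N.choose p : ℝ) ^ 2)
      Filter.atTop (nhds (Real.exp (lam * (t - 1)))) := by
  refine (chord_tsum_tendsto hlam (t := t)).congr' ?_
  filter_upwards [eventually_mul_le hlam 2] with N h2p
  have hpN : chordP lam N ≤ N := by omega
  have hC : (0:ℝ) < N.choose (chordP lam N) := by exact_mod_cast Nat.choose_pos hpN
  show ∑' m : ℕ, chordQ lam N m * t ^ m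
      = (∑ I ∈ (Finset.univ : Finset (Fin N)).powersetCard (chordP lam N),
          ∑ J ∈ (Finset.univ : Finset (Fin N)).powersetCard (chordP lam N),
            t ^ (I ∩ J).card) / (N.choose (chordP lam N) : ℝ) ^ 2
  rw [total_sum, sq, mul_div_mul_left _ _ hC.ne']
  rw [tsum_eq_sum (s := Finset.range (chordP lam N + 1))
    (fun m hm => by
      rw [Finset.mem_range, not_lt] at hm
      simp [chordQ, Nat.choose_eq_zero_of_lt hm])]
  rw [Finset.sum_div]
  refine Finset.sum_congr rfl fun m _ => ?_
  unfold chordQ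
  rw [div_mul_eq_mul_div]
end

section
/- Fix reals q and q_N and define η_l = Σ_{j=0}^{l} q^j · q_N^{l−j} for each natural number l. Let T be the linear endomorphism of the space of finitely supported real-valued functions on ℕ determined on basis vectors δ_l by T(δ_l) = δ_{l+1} + η_{l−1}·δ_{l−1} for l ≥ 1 and T(δ_0) = δ_1 (equivalently, (T v)(l) = v(l−1) + η_l · v(l+1), with v(−1) := 0). Then for every natural number n, Σ_{π} q^(cr(π)) · q_N^(ne(π)) = (T^(2n) δ_0)(0), where the sum ranges over all perfect matchings π of {1, …, 2n}. In particular for perfect matchings of an odd number of points the corresponding entry (T^(2n+1) δ_0)(0) vanishes. -/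
/-- A perfect matching of `Fin N`: chords recorded as pairs `(a, b)` with `a < b`,
every point lying on exactly one chord. -/
def IsChordDiagram {N : ℕ} (M : Finset (Fin N × Fin N)) : Prop :=
  (∀ e ∈ M, e.1 < e.2) ∧ ∀ x : Fin N, ∃! e, e ∈ M ∧ (x = e.1 ∨ x = e.2)

/-- Number of crossing pairs of chords: `a < c < b < d`. -/
def crossings {N : ℕ} (M : Finset (Fin N × Fin N)) : ℕ :=
  ((M ×ˢ M).filter fun p => p.1.1 < p.2.1 ∧ p.2.1 < p.1.2 ∧ p.1.2 < p.2.2).card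

/-- Number of nested pairs of chords: `a < c < d < b`. -/
def nestings {N : ℕ} (M : Finset (Fin N × Fin N)) : ℕ :=
  ((M ×ˢ M).filter fun p => p.1.1 < p.2.1 ∧ p.2.2 < p.1.2).card

/-- `η_l = Σ_{j=0}^{l} q^j q_N^(l−j)`. -/
def eta (q qN : ℝ) (l : ℕ) : ℝ := ∑ j ∈ Finset.range (l + 1), q ^ j * qN ^ (l - j)

/-- The transfer matrix, acting on coordinates by
`(T v)(l) = v(l−1) + η_l·v(l+1)` with `v(−1) := 0`;
equivalently `T δ_l = δ_{l+1} + η_{l−1} δ_{l−1}` on basis vectors. -/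
def transfer (q qN : ℝ) (v : ℕ → ℝ) : ℕ → ℝ :=
  fun l => (if l = 0 then 0 else v (l - 1)) + eta q qN l * v (l + 1)

/-- The basis vector `δ_0`. -/
def delta0 : ℕ → ℝ := fun l => if l = 0 then 1 else 0

open scoped Classical

namespace ChordAux

open Finset

/-- crossings count, double-indicator form, on ℕ pairs. -/
def crN (C : Finset (ℕ × ℕ)) : ℕ :=
  ∑ e ∈ C, ∑ f ∈ C, if e.1 < f.1 ∧ f.1 < e.2 ∧ e.2 < f.2 then 1 else 0

def neN (C : Finset (ℕ × ℕ)) : ℕ :=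
  ∑ e ∈ C, ∑ f ∈ C, if e.1 < f.1 ∧ f.2 < e.2 then 1 else 0

def XC (C : Finset (ℕ × ℕ)) (O : Finset ℕ) : ℕ :=
  ∑ e ∈ C, ∑ o ∈ O, if e.1 < o ∧ o < e.2 then 1 else 0

def YC (C : Finset (ℕ × ℕ)) (O : Finset ℕ) : ℕ :=
  ∑ e ∈ C, ∑ o ∈ O, if o < e.1 then 1 else 0

noncomputable def W (q qN : ℝ) (C : Finset (ℕ × ℕ)) (O : Finset ℕ) : ℝ :=
  q ^ (crN C + XC C O) * qN ^ (neN C + YC C O)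

/-- A partial configuration on points `{0, …, k-1}`: closed chords `C` and open points `O`. -/
def Conf (k : ℕ) (C : Finset (ℕ × ℕ)) (O : Finset ℕ) : Prop :=
  (∀ e ∈ C, e.1 < e.2) ∧
  (∀ x : ℕ, x < k ↔ (x ∈ O ∨ ∃ e ∈ C, x = e.1 ∨ x = e.2)) ∧
  (∀ o ∈ O, ∀ e ∈ C, o ≠ e.1 ∧ o ≠ e.2) ∧
  (∀ e ∈ C, ∀ f ∈ C, e ≠ f → e.1 ≠ f.1 ∧ e.1 ≠ f.2 ∧ e.2 ≠ f.1 ∧ e.2 ≠ f.2)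

lemma Conf.fst_lt {k C O} (h : Conf k C O) {e : ℕ × ℕ} (he : e ∈ C) : e.1 < k :=
  (h.2.1 e.1).mpr (Or.inr ⟨e, he, Or.inl rfl⟩)

lemma Conf.snd_lt {k C O} (h : Conf k C O) {e : ℕ × ℕ} (he : e ∈ C) : e.2 < k :=
  (h.2.1 e.2).mpr (Or.inr ⟨e, he, Or.inr rfl⟩)

lemma Conf.open_lt {k C O} (h : Conf k C O) {o : ℕ} (ho : o ∈ O) : o < k :=
  (h.2.1 o).mpr (Or.inl ho)

noncomputable def confs (k l : ℕ) : Finset (Finset (ℕ × ℕ) × Finset ℕ) :=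
  (((Finset.range k ×ˢ Finset.range k).powerset) ×ˢ (Finset.range k).powerset).filter
    (fun p => Conf k p.1 p.2 ∧ p.2.card = l)

lemma mem_confs {k l : ℕ} {p : Finset (ℕ × ℕ) × Finset ℕ} :
    p ∈ confs k l ↔ Conf k p.1 p.2 ∧ p.2.card = l := by
  constructor
  · intro h; exact (Finset.mem_filter.mp h).2
  · intro h
    refine Finset.mem_filter.mpr ⟨Finset.mem_product.mpr ⟨?_, ?_⟩, h⟩
    · refine Finset.mem_powerset.mpr (fun e he => Finset.mem_product.mpr ⟨?_, ?_⟩)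
      · exact Finset.mem_range.mpr (h.1.fst_lt he)
      · exact Finset.mem_range.mpr (h.1.snd_lt he)
    · exact Finset.mem_powerset.mpr (fun o ho => Finset.mem_range.mpr (h.1.open_lt ho))

noncomputable def S (q qN : ℝ) (k l : ℕ) : ℝ := ∑ p ∈ confs k l, W q qN p.1 p.2

lemma conf_zero {C : Finset (ℕ × ℕ)} {O : Finset ℕ} (h : Conf 0 C O) : C = ∅ ∧ O = ∅ := by
  constructor
  · exact Finset.eq_empty_of_forall_notMem fun e he => absurd (h.fst_lt he) (Nat.not_lt_zero _)
  · exact Finset.eq_empty_of_forall_notMem fun o ho => absurd (h.open_lt ho) (Nat.not_lt_zero _)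

lemma conf_empty : Conf 0 (∅ : Finset (ℕ × ℕ)) (∅ : Finset ℕ) := by
  refine ⟨by simp, fun x => ?_, by simp, by simp⟩
  simp

lemma S_zero (q qN : ℝ) (l : ℕ) : S q qN 0 l = delta0 l := by
  rcases Nat.eq_zero_or_pos l with hl | hl
  · subst hl
    have hconfs : confs 0 0 = {((∅ : Finset (ℕ × ℕ)), (∅ : Finset ℕ))} := by
      ext p
      rw [mem_confs, Finset.mem_singleton]
      constructor
      · rintro ⟨hc, -⟩
        obtain ⟨h1, h2⟩ := conf_zero hc
        exact Prod.ext h1 h2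
      · rintro rfl
        exact ⟨conf_empty, rfl⟩
    rw [S, hconfs, Finset.sum_singleton]
    simp [W, crN, neN, XC, YC, delta0]
  · have hconfs : confs 0 l = ∅ := by
      refine Finset.eq_empty_of_forall_notMem fun p hp => ?_
      obtain ⟨hc, hcard⟩ := mem_confs.mp hp
      rw [(conf_zero hc).2] at hcard
      simp at hcard
      omega
    rw [S, hconfs, Finset.sum_empty, delta0]
    simp [Nat.pos_iff_ne_zero.mp hl]

lemma closer_not_mem {k : ℕ} {C : Finset (ℕ × ℕ)} {O : Finset ℕ} (h : Conf k C O) (c : ℕ) :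
    (c, k) ∉ C := fun hm => lt_irrefl k (h.snd_lt hm)

lemma conf_erase_open {k : ℕ} {C : Finset (ℕ × ℕ)} {O : Finset ℕ}
    (h : Conf (k+1) C O) (hk : k ∈ O) : Conf k C (O.erase k) := by
  obtain ⟨h1, h2, h3, h4⟩ := h
  refine ⟨h1, fun x => ⟨fun hx => ?_, fun hx => ?_⟩, fun o ho e he => h3 o (Finset.mem_of_mem_erase ho) e he, h4⟩
  · rcases (h2 x).mp (Nat.lt_succ_of_lt hx) with hO | hE
    · exact Or.inl (Finset.mem_erase.mpr ⟨Nat.ne_of_lt hx, hO⟩)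
    · exact Or.inr hE
  · rcases hx with hO | ⟨e, he, hE⟩
    · have := (h2 x).mpr (Or.inl (Finset.mem_of_mem_erase hO))
      have hne := (Finset.mem_erase.mp hO).1
      omega
    · have hxk1 := (h2 x).mpr (Or.inr ⟨e, he, hE⟩)
      have hne : x ≠ k := by
        rcases hE with rfl | rfl
        · exact fun hh => (h3 k hk e he).1 hh.symm
        · exact fun hh => (h3 k hk e he).2 hh.symm
      omega

lemma conf_insert_open {k : ℕ} {C : Finset (ℕ × ℕ)} {O : Finset ℕ}
    (h : Conf k C O) : Conf (k+1) C (insert k O) := by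
  refine ⟨h.1, fun x => ⟨fun hx => ?_, fun hx => ?_⟩, fun o ho e he => ?_, h.2.2.2⟩
  · rcases Nat.lt_succ_iff_lt_or_eq.mp hx with hx' | rfl
    · rcases (h.2.1 x).mp hx' with hO | hE
      · exact Or.inl (Finset.mem_insert_of_mem hO)
      · exact Or.inr hE
    · exact Or.inl (Finset.mem_insert_self _ _)
  · rcases hx with hO | ⟨e, he, hE⟩
    · rcases Finset.mem_insert.mp hO with rfl | hO'
      · omega
      · have := h.open_lt hO'; omega
    · have h5 := h.fst_lt he
      have h6 := h.snd_lt he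
      rcases hE with rfl | rfl <;> omega
  · rcases Finset.mem_insert.mp ho with rfl | ho'
    · have h5 := h.fst_lt he
      have h6 := h.snd_lt he
      omega
    · exact h.2.2.1 o ho' e he

lemma conf_close {k : ℕ} {C' : Finset (ℕ × ℕ)} {O' : Finset ℕ}
    (h : Conf k C' O') {c : ℕ} (hc : c ∈ O') :
    Conf (k+1) (insert (c, k) C') (O'.erase c) := by
  have hck : c < k := h.open_lt hc
  refine ⟨?_, fun x => ⟨fun hx => ?_, fun hx => ?_⟩, fun o ho e he => ?_, fun e he f hf hef => ?_⟩
  · intro e he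
    rcases Finset.mem_insert.mp he with rfl | he'
    · exact hck
    · exact h.1 e he'
  · rcases Nat.lt_succ_iff_lt_or_eq.mp hx with hx' | hxk
    · rcases (h.2.1 x).mp hx' with hO | ⟨e, he, hE⟩
      · by_cases hxc : x = c
        · exact Or.inr ⟨(c, k), Finset.mem_insert_self _ _, Or.inl hxc⟩
        · exact Or.inl (Finset.mem_erase.mpr ⟨hxc, hO⟩)
      · exact Or.inr ⟨e, Finset.mem_insert_of_mem he, hE⟩
    · exact Or.inr ⟨(c, k), Finset.mem_insert_self _ _, Or.inr hxk⟩
  · rcases hx with hO | ⟨e, he, hE⟩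
    · have := h.open_lt (Finset.mem_of_mem_erase hO); omega
    · rcases Finset.mem_insert.mp he with rfl | he'
      · rcases hE with rfl | rfl <;> omega
      · have h5 := h.fst_lt he'
        have h6 := h.snd_lt he'
        rcases hE with rfl | rfl <;> omega
  · have hoO : o ∈ O' := Finset.mem_of_mem_erase ho
    have hoc : o ≠ c := (Finset.mem_erase.mp ho).1
    have hok : o < k := h.open_lt hoO
    rcases Finset.mem_insert.mp he with rfl | he'
    · exact ⟨hoc, by omega⟩
    · exact h.2.2.1 o hoO e he'
  · rcases Finset.mem_insert.mp he with rfl | he' <;> rcases Finset.mem_insert.mp hf with hf2 | hf'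
    · exact absurd hf2.symm hef
    · have h3 := h.2.2.1 c hc f hf'
      have h5 := h.fst_lt hf'
      have h6 := h.snd_lt hf'
      exact ⟨fun hh => h3.1 hh, fun hh => h3.2 hh, by omega, by omega⟩
    · subst hf2
      have h3 := h.2.2.1 c hc e he'
      have h5 := h.fst_lt he'
      have h6 := h.snd_lt he'
      exact ⟨fun hh => h3.1 hh.symm, by omega, fun hh => h3.2 hh.symm, by omega⟩ 
    · exact h.2.2.2 e he' f hf' hef

lemma conf_open_of_close {k : ℕ} {C : Finset (ℕ × ℕ)} {O : Finset ℕ}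
    (h : Conf (k+1) C O) (hk : k ∉ O) {e : ℕ × ℕ} (he : e ∈ C) (h2k : e.2 = k) :
    Conf k (C.erase e) (insert e.1 O) := by
  obtain ⟨h1, h2, h3, h4⟩ := h
  have he1k : e.1 < k := by have := h1 e he; omega
  refine ⟨fun f hf => h1 f (Finset.mem_of_mem_erase hf),
      fun x => ⟨fun hx => ?_, fun hx => ?_⟩, fun o ho f hf => ?_, fun a ha b hb hab =>
        h4 a (Finset.mem_of_mem_erase ha) b (Finset.mem_of_mem_erase hb) hab⟩
  · rcases (h2 x).mp (Nat.lt_succ_of_lt hx) with hO | ⟨f, hf, hF⟩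
    · exact Or.inl (Finset.mem_insert_of_mem hO)
    · by_cases hfe : f = e
      · subst hfe
        rcases hF with rfl | rfl
        · exact Or.inl (Finset.mem_insert_self _ _)
        · omega
      · exact Or.inr ⟨f, Finset.mem_erase.mpr ⟨hfe, hf⟩, hF⟩
  · rcases hx with hO | ⟨f, hf, hF⟩
    · rcases Finset.mem_insert.mp hO with rfl | hO'
      · exact he1k
      · have := (h2 x).mpr (Or.inl hO')
        have : x ≠ k := fun hh => hk (hh ▸ hO')
        omega
    · have hfC : f ∈ C := Finset.mem_of_mem_erase hf
      have hfe : f ≠ e := (Finset.mem_erase.mp hf).1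
      have hxk1 := (h2 x).mpr (Or.inr ⟨f, hfC, hF⟩)
      have hxk : x ≠ k := by
        rcases hF with rfl | rfl
        · have := h1 f hfC
          have := (h2 f.2).mpr (Or.inr ⟨f, hfC, Or.inr rfl⟩)
          omega
        · exact fun hh => (h4 f hfC e he hfe).2.2.2 (by omega)
      omega
  · have hfC : f ∈ C := Finset.mem_of_mem_erase hf
    have hfe : f ≠ e := (Finset.mem_erase.mp hf).1
    rcases Finset.mem_insert.mp ho with rfl | ho'
    · have := h4 e he f hfC (fun hh => hfe hh.symm)
      exact ⟨this.1, this.2.1⟩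
    · exact h3 o ho' f hfC

lemma closer_exists_unique {k : ℕ} {C : Finset (ℕ × ℕ)} {O : Finset ℕ}
    (h : Conf (k+1) C O) (hk : k ∉ O) : ∃! e, e ∈ C ∧ e.2 = k := by
  obtain ⟨h1, h2, h3, h4⟩ := h
  rcases (h2 k).mp (Nat.lt_succ_self k) with hO | ⟨e, he, hE⟩
  · exact absurd hO hk
  · have h2k : e.2 = k := by
      rcases hE with rfl | rfl
      · have := h1 e he
        have := (h2 e.2).mpr (Or.inr ⟨e, he, Or.inr rfl⟩)
        omega
      · rfl
    refine ⟨e, ⟨he, h2k⟩, fun f ⟨hf, hf2⟩ => ?_⟩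
    by_contra hne
    exact (h4 f hf e he hne).2.2.2 (by omega)

lemma sum2_insert {α : Type*} [DecidableEq α] (g : α → α → ℕ) {a : α} {s : Finset α}
    (ha : a ∉ s) :
    ∑ e ∈ insert a s, ∑ f ∈ insert a s, g e f
      = (((∑ e ∈ s, ∑ f ∈ s, g e f) + g a a) + ∑ f ∈ s, g a f) + ∑ e ∈ s, g e a := by
  rw [Finset.sum_insert ha, Finset.sum_insert ha,
    Finset.sum_congr rfl (fun e (_ : e ∈ s) => Finset.sum_insert ha (f := fun f => g e f)),
    Finset.sum_add_distrib]
  ring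

lemma W_erase_open {q qN : ℝ} {k : ℕ} {C : Finset (ℕ × ℕ)} {O : Finset ℕ}
    (h : Conf (k+1) C O) (hk : k ∈ O) : W q qN C O = W q qN C (O.erase k) := by
  have hX : XC C O = XC C (O.erase k) := by
    refine Finset.sum_congr rfl fun e he => ?_
    rw [← Finset.insert_erase hk, Finset.sum_insert (Finset.notMem_erase _ _)]
    have h1 : e.2 < k + 1 := h.snd_lt he
    have h2 : k ≠ e.2 := (h.2.2.1 k hk e he).2
    have : ¬ (e.1 < k ∧ k < e.2) := by omega
    simp [this]
  have hY : YC C O = YC C (O.erase k) := by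
    refine Finset.sum_congr rfl fun e he => ?_
    rw [← Finset.insert_erase hk, Finset.sum_insert (Finset.notMem_erase _ _)]
    have h1 : e.1 < k + 1 := h.fst_lt he
    have h2 : k ≠ e.1 := (h.2.2.1 k hk e he).1
    have : ¬ (k < e.1) := by omega
    simp [this]
  rw [W, W, hX, hY]

lemma W_close {q qN : ℝ} {k l : ℕ} {C' : Finset (ℕ × ℕ)} {O' : Finset ℕ}
    (h : Conf k C' O') {c : ℕ} (hc : c ∈ O') (hl : O'.card = l + 1) :
    W q qN (insert (c, k) C') (O'.erase c)
      = W q qN C' O' *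
        (q ^ (O'.filter fun o => c < o).card * qN ^ (l - (O'.filter fun o => c < o).card)) := by
  have hck : c < k := h.open_lt hc
  have hnm : (c, k) ∉ C' := closer_not_mem h c
  set O : Finset ℕ := O'.erase c with hO
  set A : ℕ := ∑ e ∈ C', if e.1 < c ∧ c < e.2 then 1 else 0 with hA
  set B : ℕ := ∑ e ∈ C', if c < e.1 then 1 else 0 with hB
  set rc : ℕ := ∑ o ∈ O, if c < o then 1 else 0 with hrc
  set lc : ℕ := ∑ o ∈ O, if o < c then 1 else 0 with hlc
  -- rank identification
  have hrank : (O'.filter fun o => c < o).card = rc := by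
    rw [Finset.card_filter]
    rw [← Finset.insert_erase hc, Finset.sum_insert (Finset.notMem_erase _ _)]
    simp [hrc]
    rfl
  -- crossings
  have hcr : crN (insert (c, k) C') = crN C' + A := by
    rw [crN, sum2_insert _ hnm]
    have e1 : (if (c, k).1 < (c, k).1 ∧ (c, k).1 < (c, k).2 ∧ (c, k).2 < (c, k).2 then 1 else 0) = 0 := by
      simp
    have e2 : ∑ f ∈ C', (if (c, k).1 < f.1 ∧ f.1 < (c, k).2 ∧ (c, k).2 < f.2 then 1 else 0) = 0 := by
      refine Finset.sum_eq_zero fun f hf => ?_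
      have := h.snd_lt hf
      have : ¬ (c < f.1 ∧ f.1 < k ∧ k < f.2) := by omega
      simp [this]
    have e3 : ∑ e ∈ C', (if e.1 < (c, k).1 ∧ (c, k).1 < e.2 ∧ e.2 < (c, k).2 then 1 else 0) = A := by
      refine Finset.sum_congr rfl fun e he => ?_
      have h2 := h.snd_lt he
      have : (e.1 < c ∧ c < e.2 ∧ e.2 < k) ↔ (e.1 < c ∧ c < e.2) := by omega
      simp only [this]
    rw [e1, e2, e3, crN]
    ring
  -- nestings
  have hne : neN (insert (c, k) C') = neN C' + B := by
    rw [neN, sum2_insert _ hnm]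
    have e1 : (if (c, k).1 < (c, k).1 ∧ (c, k).2 < (c, k).2 then 1 else 0) = 0 := by simp
    have e2 : ∑ f ∈ C', (if (c, k).1 < f.1 ∧ f.2 < (c, k).2 then 1 else 0) = B := by
      refine Finset.sum_congr rfl fun f hf => ?_
      have h2 := h.snd_lt hf
      have : (c < f.1 ∧ f.2 < k) ↔ (c < f.1) := by omega
      simp only [this]
    have e3 : ∑ e ∈ C', (if e.1 < (c, k).1 ∧ (c, k).2 < e.2 then 1 else 0) = 0 := by
      refine Finset.sum_eq_zero fun e he => ?_
      have := h.snd_lt he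
      have : ¬ (e.1 < c ∧ k < e.2) := by omega
      simp [this]
    rw [e1, e2, e3, neN]
    ring
  -- X
  have hXins : XC (insert (c, k) C') O = XC C' O + rc := by
    rw [XC, Finset.sum_insert hnm]
    have : ∑ o ∈ O, (if (c, k).1 < o ∧ o < (c, k).2 then 1 else 0) = rc := by
      refine Finset.sum_congr rfl fun o ho => ?_
      have : o < k := h.open_lt (Finset.mem_of_mem_erase ho)
      have heq : (c < o ∧ o < k) ↔ (c < o) := by omega
      simp only [heq]
    rw [this, XC]
    ring
  have hYins : YC (insert (c, k) C') O = YC C' O + lc := by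
    rw [YC, Finset.sum_insert hnm]
    have : ∑ o ∈ O, (if o < (c, k).1 then 1 else 0) = lc := rfl
    rw [this, YC]
    ring
  have hXfull : XC C' O' = XC C' O + A := by
    rw [XC, XC, ← Finset.sum_add_distrib]
    refine Finset.sum_congr rfl fun e he => ?_
    rw [← Finset.insert_erase hc, Finset.sum_insert (Finset.notMem_erase _ _)]
    ring
  have hYfull : YC C' O' = YC C' O + B := by
    rw [YC, YC, ← Finset.sum_add_distrib]
    refine Finset.sum_congr rfl fun e he => ?_
    rw [← Finset.insert_erase hc, Finset.sum_insert (Finset.notMem_erase _ _)]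
    ring
  have hcardO : O.card = l := by
    rw [hO, Finset.card_erase_of_mem hc, hl]
    omega
  have hrclc : rc + lc = l := by
    rw [hrc, hlc, ← Finset.sum_add_distrib, ← hcardO, Finset.card_eq_sum_ones]
    refine Finset.sum_congr rfl fun o ho => ?_
    have : o ≠ c := (Finset.mem_erase.mp ho).1
    rcases lt_trichotomy c o with hh | hh | hh <;> simp [hh] <;> omega
  have hlc' : lc = l - rc := by omega
  rw [W, W, hcr, hne, hXins, hYins, hrank, hlc']
  rw [pow_add, pow_add, pow_add, pow_add]
  have h1 : crN C' + XC C' O' = crN C' + XC C' O + A := by rw [hXfull]; ring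
  have h2 : neN C' + YC C' O' = neN C' + YC C' O + B := by rw [hYfull]; ring
  rw [hXfull, hYfull, pow_add, pow_add]
  ring

lemma rank_sum {l : ℕ} {O' : Finset ℕ} (hl : O'.card = l + 1) (g : ℕ → ℝ) :
    ∑ c ∈ O', g ((O'.filter fun o => c < o).card) = ∑ j ∈ Finset.range (l + 1), g j := by
  set r : ℕ → ℕ := fun c => (O'.filter fun o => c < o).card with hr
  have hmono : ∀ x ∈ O', ∀ y ∈ O', x < y → r y < r x := by
    intro x hx y hy hxy
    apply Finset.card_lt_card
    rw [Finset.ssubset_iff_of_subset]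
    · exact ⟨y, Finset.mem_filter.mpr ⟨hy, hxy⟩, fun hmem => lt_irrefl y (Finset.mem_filter.mp hmem).2⟩
    · exact fun o ho => Finset.mem_filter.mpr ⟨(Finset.mem_filter.mp ho).1, lt_trans hxy (Finset.mem_filter.mp ho).2⟩
  have hinj : ∀ x ∈ O', ∀ y ∈ O', r x = r y → x = y := by
    intro x hx y hy hxy
    rcases lt_trichotomy x y with hh | hh | hh
    · exact absurd hxy (Nat.ne_of_gt (hmono x hx y hy hh))
    · exact hh
    · exact absurd hxy (Nat.ne_of_lt (hmono y hy x hx hh))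
  have him : O'.image r = Finset.range (l + 1) := by
    apply Finset.eq_of_subset_of_card_le
    · intro j hj
      obtain ⟨c, hcm, rfl⟩ := Finset.mem_image.mp hj
      rw [Finset.mem_range]
      have hsub : O'.filter (fun o => c < o) ⊆ O'.erase c := by
        intro o ho
        exact Finset.mem_erase.mpr ⟨Nat.ne_of_gt (Finset.mem_filter.mp ho).2, (Finset.mem_filter.mp ho).1⟩
      have := Finset.card_le_card hsub
      rw [Finset.card_erase_of_mem hcm, hl] at this
      simpa [hr] using Nat.lt_succ_of_le this
    · rw [Finset.card_range, Finset.card_image_of_injOn (fun x hx y hy => hinj x hx y hy), hl]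
  rw [← him, Finset.sum_image hinj]

lemma eta_rank_sum {q qN : ℝ} {l : ℕ} {O' : Finset ℕ} (hl : O'.card = l + 1) :
    ∑ c ∈ O', q ^ (O'.filter fun o => c < o).card * qN ^ (l - (O'.filter fun o => c < o).card)
      = eta q qN l :=
  rank_sum hl (fun j => q ^ j * qN ^ (l - j))

lemma S_succ (q qN : ℝ) (k l : ℕ) :
    S q qN (k+1) l
      = (if l = 0 then 0 else S q qN k (l-1)) + eta q qN l * S q qN k (l+1) := by
  rw [S, ← Finset.sum_filter_add_sum_filter_not (confs (k+1) l) (fun p => k ∈ p.2)]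
  congr 1
  · -- part 1 : point k is open
    by_cases hl : l = 0
    · subst hl
      have hempty : (confs (k+1) 0).filter (fun p => k ∈ p.2) = ∅ := by
        refine Finset.eq_empty_of_forall_notMem fun p hp => ?_
        obtain ⟨hpc, hpk⟩ := Finset.mem_filter.mp hp
        have hcard := (mem_confs.mp hpc).2
        rw [Finset.card_eq_zero] at hcard
        rw [hcard] at hpk
        exact absurd hpk (Finset.notMem_empty k)
      rw [hempty, Finset.sum_empty, if_pos rfl]
    · obtain ⟨m, rfl⟩ : ∃ m, l = m + 1 := ⟨l - 1, by omega⟩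
      rw [if_neg hl, S]
      simp only [Nat.add_sub_cancel]
      refine Finset.sum_bij' (i := fun p _ => (p.1, p.2.erase k))
        (j := fun p _ => (p.1, insert k p.2)) ?_ ?_ ?_ ?_ ?_
      · intro p hp
        obtain ⟨hpc, hpk⟩ := Finset.mem_filter.mp hp
        obtain ⟨hconf, hcard⟩ := mem_confs.mp hpc
        refine mem_confs.mpr ⟨conf_erase_open hconf hpk, ?_⟩
        rw [Finset.card_erase_of_mem hpk, hcard]
        omega
      · intro p hp
        obtain ⟨hconf, hcard⟩ := mem_confs.mp hp
        have hknotin : k ∉ p.2 := fun hh => lt_irrefl k (hconf.open_lt hh)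
        refine Finset.mem_filter.mpr ⟨mem_confs.mpr ⟨conf_insert_open hconf, ?_⟩,
          Finset.mem_insert_self _ _⟩
        rw [Finset.card_insert_of_notMem hknotin, hcard]
      · intro p hp
        obtain ⟨hpc, hpk⟩ := Finset.mem_filter.mp hp
        simp only [Finset.insert_erase hpk]
      · intro p hp
        obtain ⟨hconf, hcard⟩ := mem_confs.mp hp
        have hknotin : k ∉ p.2 := fun hh => lt_irrefl k (hconf.open_lt hh)
        simp only [Finset.erase_insert hknotin]
      · intro p hp
        obtain ⟨hpc, hpk⟩ := Finset.mem_filter.mp hp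
        exact W_erase_open (mem_confs.mp hpc).1 hpk
  · -- part 2 : point k closes a chord
    have key : ∀ p ∈ (confs (k+1) l).filter (fun p => k ∉ p.2),
        W q qN p.1 p.2 = ∑ _e ∈ p.1.filter (fun e => e.2 = k), W q qN p.1 p.2 := by
      intro p hp
      obtain ⟨hpc, hpk⟩ := Finset.mem_filter.mp hp
      obtain ⟨hconf, hcard⟩ := mem_confs.mp hpc
      obtain ⟨e₀, he₀, hu⟩ := closer_exists_unique hconf hpk
      have hsingle : p.1.filter (fun e => e.2 = k) = {e₀} := by
        ext f
        simp only [Finset.mem_filter, Finset.mem_singleton]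
        constructor
        · exact fun hf => hu f hf
        · rintro rfl
          exact he₀
      rw [hsingle, Finset.sum_singleton]
    calc ∑ p ∈ (confs (k+1) l).filter (fun p => k ∉ p.2), W q qN p.1 p.2
        = ∑ p ∈ (confs (k+1) l).filter (fun p => k ∉ p.2),
            ∑ _e ∈ p.1.filter (fun e => e.2 = k), W q qN p.1 p.2 :=
          Finset.sum_congr rfl key
      _ = ∑ x ∈ ((confs (k+1) l).filter (fun p => k ∉ p.2)).sigma
            (fun p => p.1.filter (fun e => e.2 = k)), W q qN x.1.1 x.1.2 :=
          Finset.sum_sigma' _ _ _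
      _ = ∑ y ∈ (confs k (l+1)).sigma (fun p => p.2),
            W q qN y.1.1 y.1.2 *
              (q ^ (y.1.2.filter fun o => y.2 < o).card *
                qN ^ (l - (y.1.2.filter fun o => y.2 < o).card)) := by
          refine Finset.sum_bij'
            (i := fun x _ => (⟨(x.1.1.erase x.2, insert x.2.1 x.1.2), x.2.1⟩ :
              (_ : Finset (ℕ × ℕ) × Finset ℕ) × ℕ))
            (j := fun y _ => (⟨(insert (y.2, k) y.1.1, y.1.2.erase y.2), (y.2, k)⟩ :
              (_ : Finset (ℕ × ℕ) × Finset ℕ) × ℕ × ℕ)) ?_ ?_ ?_ ?_ ?_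
          · rintro ⟨⟨C, O⟩, e⟩ hx
            obtain ⟨hx1, hx2⟩ := Finset.mem_sigma.mp hx
            obtain ⟨hpc, hpk⟩ := Finset.mem_filter.mp hx1
            obtain ⟨hconf, hcard⟩ := mem_confs.mp hpc
            obtain ⟨heC, h2k⟩ := Finset.mem_filter.mp hx2
            have he1O : e.1 ∉ O := fun hh => (hconf.2.2.1 e.1 hh e heC).1 rfl
            refine Finset.mem_sigma.mpr ⟨mem_confs.mpr
              ⟨conf_open_of_close hconf hpk heC h2k, ?_⟩, Finset.mem_insert_self _ _⟩
            rw [Finset.card_insert_of_notMem he1O, hcard]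
          · rintro ⟨⟨C', O'⟩, c⟩ hy
            obtain ⟨hy1, hy2⟩ := Finset.mem_sigma.mp hy
            obtain ⟨hconf, hcard⟩ := mem_confs.mp hy1
            have hknotin : k ∉ O'.erase c := fun hh =>
              lt_irrefl k (hconf.open_lt (Finset.mem_of_mem_erase hh))
            refine Finset.mem_sigma.mpr ⟨Finset.mem_filter.mpr
              ⟨mem_confs.mpr ⟨conf_close hconf hy2, ?_⟩, hknotin⟩,
              Finset.mem_filter.mpr ⟨Finset.mem_insert_self _ _, rfl⟩⟩
            rw [Finset.card_erase_of_mem hy2, hcard]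
            omega
          · rintro ⟨⟨C, O⟩, e⟩ hx
            obtain ⟨hx1, hx2⟩ := Finset.mem_sigma.mp hx
            obtain ⟨hpc, hpk⟩ := Finset.mem_filter.mp hx1
            obtain ⟨hconf, hcard⟩ := mem_confs.mp hpc
            obtain ⟨heC, h2k⟩ := Finset.mem_filter.mp hx2
            have he1O : e.1 ∉ O := fun hh => (hconf.2.2.1 e.1 hh e heC).1 rfl
            have hek : (e.1, k) = e := Prod.ext rfl h2k.symm
            simp only [hek, Finset.insert_erase heC, Finset.erase_insert he1O]
          · rintro ⟨⟨C', O'⟩, c⟩ hy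
            obtain ⟨hy1, hy2⟩ := Finset.mem_sigma.mp hy
            obtain ⟨hconf, hcard⟩ := mem_confs.mp hy1
            have hnm : (c, k) ∉ C' := closer_not_mem hconf c
            simp only [Finset.erase_insert hnm, Finset.insert_erase hy2]
          · rintro ⟨⟨C, O⟩, e⟩ hx
            obtain ⟨hx1, hx2⟩ := Finset.mem_sigma.mp hx
            obtain ⟨hpc, hpk⟩ := Finset.mem_filter.mp hx1
            obtain ⟨hconf, hcard⟩ := mem_confs.mp hpc
            obtain ⟨heC, h2k⟩ := Finset.mem_filter.mp hx2
            have he1O : e.1 ∉ O := fun hh => (hconf.2.2.1 e.1 hh e heC).1 rfl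
            have hconf' : Conf k (C.erase e) (insert e.1 O) :=
              conf_open_of_close hconf hpk heC h2k
            have hcard' : (insert e.1 O).card = l + 1 := by
              rw [Finset.card_insert_of_notMem he1O, hcard]
            have hw := W_close (q := q) (qN := qN) hconf' (Finset.mem_insert_self e.1 O) hcard'
            have hek : (e.1, k) = e := Prod.ext rfl h2k.symm
            rw [hek, Finset.insert_erase heC, Finset.erase_insert he1O] at hw
            exact hw
      _ = ∑ p' ∈ confs k (l+1), ∑ c ∈ p'.2,
            W q qN p'.1 p'.2 *
              (q ^ (p'.2.filter fun o => c < o).card *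
                qN ^ (l - (p'.2.filter fun o => c < o).card)) :=
          (Finset.sum_sigma' (confs k (l+1)) (fun p => p.2)
            (fun a c => W q qN a.1 a.2 *
              (q ^ (a.2.filter fun o => c < o).card *
                qN ^ (l - (a.2.filter fun o => c < o).card)))).symm
      _ = ∑ p' ∈ confs k (l+1), eta q qN l * W q qN p'.1 p'.2 := by
          refine Finset.sum_congr rfl fun p' hp' => ?_
          have hcard : p'.2.card = l + 1 := (mem_confs.mp hp').2
          rw [← Finset.mul_sum]
          rw [eta_rank_sum (q := q) (qN := qN) hcard]
          ring
      _ = eta q qN l * S q qN k (l+1) := by rw [S, Finset.mul_sum]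

lemma S_eq_iterate (q qN : ℝ) (k l : ℕ) : S q qN k l = (transfer q qN)^[k] delta0 l := by
  induction k generalizing l with
  | zero => simpa using S_zero q qN l
  | succ k ih =>
    rw [Function.iterate_succ_apply']
    have : transfer q qN ((transfer q qN)^[k] delta0) l
        = (if l = 0 then 0 else (transfer q qN)^[k] delta0 (l-1))
          + eta q qN l * (transfer q qN)^[k] delta0 (l+1) := rfl
    rw [this, S_succ, ih, ih]

lemma conf_card_parity {k : ℕ} {C : Finset (ℕ × ℕ)} {O : Finset ℕ}
    (h : Conf k C O) : 2 * C.card + O.card = k := by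
  have key : Finset.range k = (C.image Prod.fst ∪ C.image Prod.snd) ∪ O := by
    ext x
    simp only [Finset.mem_range, Finset.mem_union, Finset.mem_image]
    rw [h.2.1 x]
    constructor
    · rintro (hO | ⟨e, he, rfl | rfl⟩)
      · exact Or.inr hO
      · exact Or.inl (Or.inl ⟨e, he, rfl⟩)
      · exact Or.inl (Or.inr ⟨e, he, rfl⟩)
    · rintro ((⟨e, he, rfl⟩ | ⟨e, he, rfl⟩) | hO)
      · exact Or.inr ⟨e, he, Or.inl rfl⟩
      · exact Or.inr ⟨e, he, Or.inr rfl⟩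
      · exact Or.inl hO
  have hfstinj : ∀ x ∈ C, ∀ y ∈ C, x.1 = y.1 → x = y := by
    intro x hx y hy hxy
    by_contra hne
    exact (h.2.2.2 x hx y hy hne).1 hxy
  have hsndinj : ∀ x ∈ C, ∀ y ∈ C, x.2 = y.2 → x = y := by
    intro x hx y hy hxy
    by_contra hne
    exact (h.2.2.2 x hx y hy hne).2.2.2 hxy
  have d1 : Disjoint (C.image Prod.fst) (C.image Prod.snd) := by
    rw [Finset.disjoint_left]
    intro x hx1 hx2
    obtain ⟨e, he, he1⟩ := Finset.mem_image.mp hx1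
    obtain ⟨f, hf, hf2⟩ := Finset.mem_image.mp hx2
    by_cases hef : e = f
    · subst hef
      have := h.1 e he
      omega
    · exact (h.2.2.2 e he f hf hef).2.1 (he1.trans hf2.symm)
  have d2 : Disjoint (C.image Prod.fst ∪ C.image Prod.snd) O := by
    rw [Finset.disjoint_left]
    intro x hx1 hxO
    rcases Finset.mem_union.mp hx1 with hx | hx
    · obtain ⟨e, he, he1⟩ := Finset.mem_image.mp hx
      exact (h.2.2.1 x hxO e he).1 he1.symm
    · obtain ⟨e, he, he1⟩ := Finset.mem_image.mp hx
      exact (h.2.2.1 x hxO e he).2 he1.symm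
  have hk : k = ((C.image Prod.fst ∪ C.image Prod.snd) ∪ O).card := by
    rw [← key, Finset.card_range]
  rw [Finset.card_union_of_disjoint d2, Finset.card_union_of_disjoint d1,
    Finset.card_image_of_injOn (fun x hx y hy => hfstinj x hx y hy),
    Finset.card_image_of_injOn (fun x hx y hy => hsndinj x hx y hy)] at hk
  omega

/-- Endpoint-value map from `Fin`-chords to `ℕ`-chords. -/
def vm {N : ℕ} (e : Fin N × Fin N) : ℕ × ℕ := (e.1.val, e.2.val)

lemma vm_inj {N : ℕ} : Function.Injective (vm (N := N)) := by
  intro a b hab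
  have h1 : a.1.val = b.1.val := congrArg Prod.fst hab
  have h2 : a.2.val = b.2.val := congrArg Prod.snd hab
  exact Prod.ext (Fin.val_injective h1) (Fin.val_injective h2)

lemma shared_point {N : ℕ} {M : Finset (Fin N × Fin N)} (hcd : IsChordDiagram M)
    {e f : Fin N × Fin N} (he : e ∈ M) (hf : f ∈ M) {x : Fin N}
    (hxe : x = e.1 ∨ x = e.2) (hxf : x = f.1 ∨ x = f.2) : e = f := by
  obtain ⟨g, hg, hu⟩ := hcd.2 x
  exact (hu e ⟨he, hxe⟩).trans (hu f ⟨hf, hxf⟩).symm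

lemma conf_of_chord {N : ℕ} {M : Finset (Fin N × Fin N)} (hcd : IsChordDiagram M) :
    Conf N (M.image vm) ∅ := by
  refine ⟨?_, fun x => ⟨fun hx => ?_, fun hx => ?_⟩, by simp, ?_⟩
  · intro E hE
    obtain ⟨e, he, rfl⟩ := Finset.mem_image.mp hE
    exact Fin.lt_def.mp (hcd.1 e he)
  · right
    obtain ⟨e, ⟨heM, hxe⟩, -⟩ := hcd.2 ⟨x, hx⟩
    refine ⟨vm e, Finset.mem_image_of_mem _ heM, ?_⟩
    rcases hxe with h | h
    · exact Or.inl (congrArg Fin.val h)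
    · exact Or.inr (congrArg Fin.val h)
  · rcases hx with hO | ⟨E, hE, hxE⟩
    · simp at hO
    · obtain ⟨e, he, rfl⟩ := Finset.mem_image.mp hE
      rcases hxE with rfl | rfl
      · exact e.1.isLt
      · exact e.2.isLt
  · intro E hE F hF hEF
    obtain ⟨e, he, rfl⟩ := Finset.mem_image.mp hE
    obtain ⟨f, hf, rfl⟩ := Finset.mem_image.mp hF
    have hef : e ≠ f := fun hh => hEF (by rw [hh])
    refine ⟨?_, ?_, ?_, ?_⟩ <;> intro hh <;> apply hef
    · exact shared_point hcd he hf (Or.inl rfl) (Or.inl (Fin.val_injective hh))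
    · exact shared_point hcd he hf (Or.inl rfl) (Or.inr (Fin.val_injective hh))
    · exact shared_point hcd he hf (Or.inr rfl) (Or.inl (Fin.val_injective hh))
    · exact shared_point hcd he hf (Or.inr rfl) (Or.inr (Fin.val_injective hh))

lemma crN_image {N : ℕ} (M : Finset (Fin N × Fin N)) : crN (M.image vm) = crossings M := by
  rw [crossings, Finset.card_filter, Finset.sum_product, crN,
    Finset.sum_image (fun x _ y _ h => vm_inj h)]
  refine Finset.sum_congr rfl fun e _ => ?_
  rw [Finset.sum_image (fun x _ y _ h => vm_inj h)]
  refine Finset.sum_congr rfl fun f _ => ?_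
  refine if_congr ?_ rfl rfl
  show (e.1.val < f.1.val ∧ f.1.val < e.2.val ∧ e.2.val < f.2.val) ↔ _
  rw [Fin.lt_def, Fin.lt_def, Fin.lt_def]

lemma neN_image {N : ℕ} (M : Finset (Fin N × Fin N)) : neN (M.image vm) = nestings M := by
  rw [nestings, Finset.card_filter, Finset.sum_product, neN,
    Finset.sum_image (fun x _ y _ h => vm_inj h)]
  refine Finset.sum_congr rfl fun e _ => ?_
  rw [Finset.sum_image (fun x _ y _ h => vm_inj h)]
  refine Finset.sum_congr rfl fun f _ => ?_
  refine if_congr ?_ rfl rfl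
  show (e.1.val < f.1.val ∧ f.2.val < e.2.val) ↔ _
  rw [Fin.lt_def, Fin.lt_def]

lemma W_closed (q qN : ℝ) (C : Finset (ℕ × ℕ)) :
    W q qN C ∅ = q ^ crN C * qN ^ neN C := by
  simp [W, XC, YC]

lemma sum_matchings (q qN : ℝ) (N : ℕ) :
    (∑ M ∈ Finset.univ.filter
        (fun M : Finset (Fin N × Fin N) => IsChordDiagram M),
        q ^ crossings M * qN ^ nestings M) = S q qN N 0 := by
  rw [S]
  refine Finset.sum_bij
    (i := fun M _ => ((M.image vm, (∅ : Finset ℕ)) : Finset (ℕ × ℕ) × Finset ℕ))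
    ?_ ?_ ?_ ?_
  · intro M hM
    have hcd : IsChordDiagram M := (Finset.mem_filter.mp hM).2
    exact mem_confs.mpr ⟨conf_of_chord hcd, rfl⟩
  · intro M hM M' hM' hMM'
    have himg : M.image vm = M'.image vm := congrArg Prod.fst hMM'
    apply Finset.image_injective vm_inj himg
  · rintro ⟨C, O⟩ hp
    obtain ⟨hconf, hcard⟩ := mem_confs.mp hp
    have hO : O = ∅ := Finset.card_eq_zero.mp hcard
    subst hO
    -- build the Fin-valued matching
    set M : Finset (Fin N × Fin N) :=
      C.attach.image (fun e =>
        ((⟨e.1.1, hconf.fst_lt e.2⟩ : Fin N), (⟨e.1.2, hconf.snd_lt e.2⟩ : Fin N))) with hM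
    have himg : M.image vm = C := by
      rw [hM, Finset.image_image]
      have : (vm ∘ fun e : {x // x ∈ C} =>
          ((⟨e.1.1, hconf.fst_lt e.2⟩ : Fin N), (⟨e.1.2, hconf.snd_lt e.2⟩ : Fin N)))
          = fun e => e.1 := by
        funext e
        rfl
      rw [this]
      exact Finset.attach_image_val
    have hcd : IsChordDiagram M := by
      constructor
      · intro E hE
        rw [hM] at hE
        obtain ⟨e, -, rfl⟩ := Finset.mem_image.mp hE
        exact Fin.lt_def.mpr (hconf.1 e.1 e.2)
      · intro x
        have hx : (x : ℕ) < N := x.isLt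
        rcases (hconf.2.1 x).mp hx with hO' | ⟨e, he, hxe⟩
        · simp at hO'
        · refine ⟨((⟨e.1, hconf.fst_lt he⟩ : Fin N), (⟨e.2, hconf.snd_lt he⟩ : Fin N)), ⟨?_, ?_⟩, ?_⟩
          · rw [hM]
            refine Finset.mem_image.mpr ⟨⟨e, he⟩, Finset.mem_attach _ _, ?_⟩
            rfl
          · rcases hxe with h | h
            · exact Or.inl (Fin.ext h)
            · exact Or.inr (Fin.ext h)
          · rintro F ⟨hFM, hxF⟩
            rw [hM] at hFM
            obtain ⟨f, -, rfl⟩ := Finset.mem_image.mp hFM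
            have hfe : f.1 = e := by
              by_contra hne
              have h4 := hconf.2.2.2 f.1 f.2 e he hne
              rcases hxF with h | h <;> rcases hxe with h' | h' <;>
                [skip; skip; skip; skip] <;>
              · have hval := congrArg Fin.val h
                simp at hval
                omega
            subst hfe
            rfl
    refine ⟨M, Finset.mem_filter.mpr ⟨Finset.mem_univ _, hcd⟩, ?_⟩
    show (M.image vm, (∅ : Finset ℕ)) = (C, (∅ : Finset ℕ))
    rw [himg]
  · intro M hM
    rw [W_closed, crN_image, neN_image]

end ChordAux

/-- Transfer matrix representation of the chord diagram generating function:
`Σ_π q^(cr π) q_N^(ne π) = ⟨0| T^(2n) |0⟩`, the sum over perfect matchings `π` of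
`{1, …, 2n}`; and the odd entries `⟨0| T^(2n+1) |0⟩` vanish. -/
theorem chord_sum_eq_transfer_matrix_entry (q qN : ℝ) (n : ℕ) :
    (∑ M ∈ Finset.univ.filter
        (fun M : Finset (Fin (2 * n) × Fin (2 * n)) => IsChordDiagram M),
        q ^ crossings M * qN ^ nestings M) = (transfer q qN)^[2 * n] delta0 0 ∧
    (transfer q qN)^[2 * n + 1] delta0 0 = 0 := by
  constructor
  · rw [← ChordAux.S_eq_iterate]
    exact ChordAux.sum_matchings q qN (2 * n)
  · rw [← ChordAux.S_eq_iterate, ChordAux.S]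
    have hempty : ChordAux.confs (2 * n + 1) 0 = ∅ := by
      refine Finset.eq_empty_of_forall_notMem fun p hp => ?_
      obtain ⟨hconf, hcard⟩ := ChordAux.mem_confs.mp hp
      have := ChordAux.conf_card_parity hconf
      omega
    rw [hempty, Finset.sum_empty]
end

section
/- Let q be a real number with 0 < q < 1. Then (1/(2π)) · ∫_0^π [Π_{k=1}^∞ (1 − q^k)] · [Π_{k=0}^∞ (1 − 2 q^k cos(2θ) + q^(2k))] dθ = 1. -/
open Finset

namespace QHermite

noncomputable def qp (q : ℝ) (n : ℕ) : ℝ := ∏ k ∈ Finset.range n, (1 - q ^ (k + 1))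

noncomputable def gb (q : ℝ) (n : ℕ) (j : ℤ) : ℝ :=
  if 0 ≤ j ∧ j ≤ n then qp q n / (qp q j.toNat * qp q (n - j.toNat)) else 0

variable {q : ℝ} (hq0 : 0 < q) (hq1 : q < 1)

lemma qp_zero : qp q 0 = 1 := by simp [qp]

lemma qp_succ (n : ℕ) : qp q (n + 1) = qp q n * (1 - q ^ (n + 1)) := by
  simp [qp, Finset.prod_range_succ]

include hq0 hq1 in
lemma qp_pos (n : ℕ) : 0 < qp q n := by
  apply Finset.prod_pos
  intro k _
  have : q ^ (k + 1) < 1 := pow_lt_one₀ hq0.le hq1 (by omega)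
  linarith

include hq0 hq1 in
lemma one_sub_pow_pos (n : ℕ) : 0 < 1 - q ^ (n + 1) := by
  have : q ^ (n + 1) < 1 := pow_lt_one₀ hq0.le hq1 (by omega)
  linarith

lemma gb_of_neg {n : ℕ} {j : ℤ} (h : j < 0) : gb q n j = 0 := by
  simp [gb]; intro h'; omega

lemma gb_of_gt {n : ℕ} {j : ℤ} (h : (n : ℤ) < j) : gb q n j = 0 := by
  simp [gb]; intro h'; omega

include hq0 hq1 in
lemma gb_zero_right (n : ℕ) : gb q n 0 = 1 := by
  simp [gb, qp_zero]
  exact (qp_pos hq0 hq1 n).ne'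

include hq0 hq1 in
lemma gb_self (n : ℕ) : gb q n n = 1 := by
  simp [gb, qp_zero]
  exact (qp_pos hq0 hq1 n).ne'

lemma gb_nat (n a : ℕ) (h : a ≤ n) :
    gb q n a = qp q n / (qp q a * qp q (n - a)) := by
  simp [gb, h]

include hq0 hq1 in
lemma gb_nonneg (n : ℕ) (j : ℤ) : 0 ≤ gb q n j := by
  unfold gb
  split
  · exact div_nonneg (qp_pos hq0 hq1 n).le
      (mul_nonneg (qp_pos hq0 hq1 _).le (qp_pos hq0 hq1 _).le)
  · exact le_refl 0

include hq0 hq1 in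
/-- q-Pascal rule I: `[n+1, j] = [n, j] + q^(n+1-j) [n, j-1]`. -/
lemma gb_pascal₁ (n : ℕ) (j : ℤ) :
    gb q (n + 1) j = gb q n j + q ^ ((n : ℤ) + 1 - j) * gb q n (j - 1) := by
  rcases lt_trichotomy j 0 with hj | rfl | hj
  · rw [gb_of_neg hj, gb_of_neg hj, gb_of_neg (by omega)]; ring
  · rw [gb_zero_right hq0 hq1, gb_zero_right hq0 hq1, gb_of_neg (by omega)]; ring
  · lift j to ℕ using hj.le with a
    have ha : 1 ≤ a := by exact_mod_cast hj
    rcases lt_trichotomy a (n + 1) with han | rfl | han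
    · -- 1 ≤ a ≤ n
      have han' : a ≤ n := by omega
      obtain ⟨b, rfl⟩ : ∃ b, a = b + 1 := ⟨a - 1, by omega⟩
      obtain ⟨c, rfl⟩ : ∃ c, n = b + 1 + c := ⟨n - (b + 1), by omega⟩
      rw [show ((b + 1 + c : ℕ) : ℤ) + 1 - ((b + 1 : ℕ) : ℤ) = ((c + 1 : ℕ) : ℤ) by
          push_cast; ring,
        zpow_natCast]
      rw [show ((b + 1 : ℕ) : ℤ) - 1 = ((b : ℕ) : ℤ) by push_cast; ring]
      rw [gb_nat _ _ (by omega), gb_nat _ _ (by omega), gb_nat _ _ (by omega)]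
      rw [show b + 1 + c + 1 - (b + 1) = c + 1 by omega,
        show b + 1 + c - (b + 1) = c by omega,
        show b + 1 + c - b = c + 1 by omega]
      rw [qp_succ (b + 1 + c), qp_succ b, qp_succ c]
      have h1 := (qp_pos hq0 hq1 (b + 1 + c)).ne'
      have h2 := (qp_pos hq0 hq1 b).ne'
      have h3 := (qp_pos hq0 hq1 c).ne'
      have h4 := (one_sub_pow_pos hq0 hq1 b).ne'
      have h5 := (one_sub_pow_pos hq0 hq1 c).ne'
      field_simp
      ring
    · -- a = n + 1
      rw [show ((n:ℤ) + 1 - ((n + 1 : ℕ) : ℤ)) = 0 by push_cast; ring, zpow_zero,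
        show ((n + 1 : ℕ) : ℤ) - 1 = ((n : ℕ) : ℤ) by push_cast; ring]
      rw [gb_self hq0 hq1, gb_self hq0 hq1, gb_of_gt (by exact_mod_cast Nat.lt_succ_self n)]
      ring
    · rw [gb_of_gt (by exact_mod_cast han), gb_of_gt (by exact_mod_cast (by omega : n < a)),
        gb_of_gt (show (n:ℤ) < (a:ℤ) - 1 by omega)]
      ring

include hq0 hq1 in
/-- q-Pascal rule II: `[n+1, j] = q^j [n, j] + [n, j-1]`. -/
lemma gb_pascal₂ (n : ℕ) (j : ℤ) :
    gb q (n + 1) j = q ^ j * gb q n j + gb q n (j - 1) := by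
  rcases lt_trichotomy j 0 with hj | rfl | hj
  · rw [gb_of_neg hj, gb_of_neg hj, gb_of_neg (by omega)]; ring
  · rw [gb_zero_right hq0 hq1, gb_zero_right hq0 hq1, gb_of_neg (by omega)]; simp
  · lift j to ℕ using hj.le with a
    have ha : 1 ≤ a := by exact_mod_cast hj
    rw [zpow_natCast]
    rcases lt_trichotomy a (n + 1) with han | rfl | han
    · have han' : a ≤ n := by omega
      obtain ⟨b, rfl⟩ : ∃ b, a = b + 1 := ⟨a - 1, by omega⟩
      obtain ⟨c, rfl⟩ : ∃ c, n = b + 1 + c := ⟨n - (b + 1), by omega⟩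
      rw [show ((b + 1 : ℕ) : ℤ) - 1 = ((b : ℕ) : ℤ) by push_cast; ring]
      rw [gb_nat _ _ (by omega), gb_nat _ _ (by omega), gb_nat _ _ (by omega)]
      rw [show b + 1 + c + 1 - (b + 1) = c + 1 by omega,
        show b + 1 + c - (b + 1) = c by omega,
        show b + 1 + c - b = c + 1 by omega]
      rw [qp_succ (b + 1 + c), qp_succ b, qp_succ c]
      have h1 := (qp_pos hq0 hq1 (b + 1 + c)).ne'
      have h2 := (qp_pos hq0 hq1 b).ne'
      have h3 := (qp_pos hq0 hq1 c).ne'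
      have h4 := (one_sub_pow_pos hq0 hq1 b).ne'
      have h5 := (one_sub_pow_pos hq0 hq1 c).ne'
      field_simp
      ring
    · rw [show ((n + 1 : ℕ) : ℤ) - 1 = ((n : ℕ) : ℤ) by push_cast; ring]
      rw [gb_self hq0 hq1, gb_self hq0 hq1, gb_of_gt (by exact_mod_cast Nat.lt_succ_self n)]
      ring
    · rw [gb_of_gt (by exact_mod_cast han), gb_of_gt (by exact_mod_cast (by omega : n < a)),
        gb_of_gt (show (n:ℤ) < (a:ℤ) - 1 by omega)]
      ring

/-- symmetry -/
lemma gb_symm (n : ℕ) (j : ℤ) : gb q n ((n : ℤ) - j) = gb q n j := by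
  by_cases h : 0 ≤ j ∧ j ≤ n
  · lift j to ℕ using h.1 with a
    have han : a ≤ n := by exact_mod_cast h.2
    rw [show (n : ℤ) - a = ((n - a : ℕ) : ℤ) by omega]
    rw [gb_nat _ _ (by omega), gb_nat _ _ han, show n - (n - a) = a by omega]
    ring
  · rcases not_and_or.mp h with h' | h'
    · rw [gb_of_gt (by omega), gb_of_neg (by omega)]
    · rw [gb_of_neg (by omega), gb_of_gt (by omega)]


include hq0 hq1 in
/-- q-Vandermonde identity. -/
lemma gb_vandermonde (m : ℕ) : ∀ (n : ℕ) (k : ℤ), gb q (m + n) k =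
    ∑ j ∈ Finset.range (n + 1),
      q ^ ((j : ℤ) * ((m : ℤ) - k + j)) * gb q m (k - j) * gb q n j := by
  have hqne : q ≠ 0 := hq0.ne'
  intro n
  induction n with
  | zero =>
    intro k
    simp [gb_zero_right hq0 hq1]
  | succ n IH =>
    intro k
    have step : ∀ j ∈ Finset.range (n + 2),
        q ^ ((j : ℤ) * ((m : ℤ) - k + j)) * gb q m (k - j) * gb q (n + 1) j
        = q ^ ((j : ℤ) * ((m : ℤ) - k + j)) * gb q m (k - j) * gb q n j
          + q ^ ((j : ℤ) * ((m : ℤ) - k + j)) * gb q m (k - j) *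
              (q ^ ((n : ℤ) + 1 - j) * gb q n (j - 1)) := by
      intro j _
      rw [gb_pascal₁ hq0 hq1]
      ring
    rw [Finset.sum_congr rfl step, Finset.sum_add_distrib]
    have hS1 : ∑ j ∈ Finset.range (n + 2),
        q ^ ((j : ℤ) * ((m : ℤ) - k + j)) * gb q m (k - j) * gb q n j
        = gb q (m + n) k := by
      rw [Finset.sum_range_succ, gb_of_gt (show (n : ℤ) < ((n+1 : ℕ) : ℤ) by push_cast; omega)]
      rw [IH k]
      ring
    have hS2 : ∑ j ∈ Finset.range (n + 2),
        q ^ ((j : ℤ) * ((m : ℤ) - k + j)) * gb q m (k - j) *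
          (q ^ ((n : ℤ) + 1 - j) * gb q n (j - 1))
        = q ^ ((m : ℤ) + n + 1 - k) * gb q (m + n) (k - 1) := by
      rw [Finset.sum_range_succ']
      push_cast
      rw [gb_of_neg (show (-1:ℤ) < 0 by norm_num), mul_zero, mul_zero, add_zero]
      have term : ∀ j ∈ Finset.range (n + 1),
          q ^ (((j:ℤ) + 1) * ((m : ℤ) - k + ((j:ℤ) + 1))) * gb q m (k - ((j:ℤ) + 1)) *
            (q ^ ((n : ℤ) + 1 - ((j:ℤ) + 1)) * gb q n ((j:ℤ) + 1 - 1))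
          = q ^ ((m : ℤ) + n + 1 - k) *
              (q ^ ((j : ℤ) * ((m : ℤ) - (k-1) + j)) * gb q m ((k-1) - j) * gb q n j) := by
        intro j _
        rw [show (j:ℤ) + 1 - 1 = (j:ℤ) by ring,
          show k - ((j:ℤ) + 1) = (k - 1) - j by ring]
        rw [mul_assoc, mul_comm (gb q m ((k-1) - j)), ← mul_assoc, ← mul_assoc, ← zpow_add₀ hqne]
        rw [show ((j:ℤ) + 1) * ((m : ℤ) - k + ((j:ℤ) + 1)) + ((n : ℤ) + 1 - ((j:ℤ) + 1))
            = ((m : ℤ) + n + 1 - k) + ((j : ℤ) * ((m : ℤ) - (k-1) + j)) by ring]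
        rw [zpow_add₀ hqne]
        ring
      rw [Finset.sum_congr rfl term, ← Finset.mul_sum, ← IH (k - 1)]
    rw [hS1, hS2, show m + (n + 1) = (m + n) + 1 by omega, gb_pascal₁ hq0 hq1]
    push_cast
    ring_nf

lemma cast_jj (j : ℕ) : ((j * (j - 1) : ℕ) : ℤ) = (j : ℤ) * ((j : ℤ) - 1) := by
  cases j with
  | zero => simp
  | succ i => push_cast [Nat.succ_sub_one]; ring

include hq0 hq1 in
/-- The key identity: `∑_j q^(j(j-1)) [M+1, j]² = [2M+1, M+1] + [2M+1, M]`. -/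
lemma T_eq (M : ℕ) :
    ∑ j ∈ Finset.range (M + 2), q ^ (j * (j - 1)) * (gb q (M + 1) j) ^ 2
      = gb q (2 * M + 1) ((M : ℤ) + 1) + gb q (2 * M + 1) (M : ℤ) := by
  have hqne : q ≠ 0 := hq0.ne'
  have expand : ∀ j ∈ Finset.range (M + 2), q ^ (j * (j - 1)) * (gb q (M + 1) j) ^ 2
      = q ^ ((j : ℤ) * j) * gb q (M + 1) j * gb q M j
        + q ^ ((j : ℤ) * ((j : ℤ) - 1)) * gb q (M + 1) j * gb q M ((j : ℤ) - 1) := by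
    intro j _
    rw [sq]
    nth_rewrite 2 [gb_pascal₂ hq0 hq1 M (j : ℤ)]
    rw [← zpow_natCast q (j * (j - 1)), cast_jj]
    have hcomb : q ^ ((j:ℤ) * ((j:ℤ) - 1)) * q ^ (j:ℤ) = q ^ ((j:ℤ) * j) := by
      rw [← zpow_add₀ hqne]; congr 1; ring
    rw [mul_add, ← hcomb]
    ring
  have h2 : (∑ j ∈ Finset.range (M + 2), q ^ (j * (j - 1)) * (gb q (M + 1) j) ^ 2)
      = ∑ j ∈ Finset.range (M + 2),
        (q ^ ((j : ℤ) * j) * gb q (M + 1) j * gb q M j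
          + q ^ ((j : ℤ) * ((j : ℤ) - 1)) * gb q (M + 1) j * gb q M ((j : ℤ) - 1)) :=
    Finset.sum_congr rfl expand
  rw [h2, Finset.sum_add_distrib]
  have hSA : ∑ j ∈ Finset.range (M + 2), q ^ ((j : ℤ) * j) * gb q (M + 1) j * gb q M j
      = gb q (2 * M + 1) ((M : ℤ) + 1) := by
    rw [Finset.sum_range_succ, gb_of_gt (show (M : ℤ) < ((M + 1 : ℕ) : ℤ) by push_cast; omega),
      mul_zero, add_zero]
    have V := gb_vandermonde hq0 hq1 (M + 1) M ((M : ℤ) + 1)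
    rw [show (M + 1) + M = 2 * M + 1 by omega] at V
    rw [V]
    refine Finset.sum_congr rfl fun j _ => ?_
    have hs := gb_symm (q := q) (M + 1) ((M : ℤ) + 1 - j)
    rw [show ((M + 1 : ℕ) : ℤ) - ((M : ℤ) + 1 - (j : ℤ)) = (j : ℤ) by push_cast; ring] at hs
    have e1 : (j : ℤ) * (((M + 1 : ℕ) : ℤ) - ((M : ℤ) + 1) + j) = (j : ℤ) * j := by
      push_cast; ring
    rw [e1, hs]
  have hSB : ∑ j ∈ Finset.range (M + 2),
        q ^ ((j : ℤ) * ((j : ℤ) - 1)) * gb q (M + 1) j * gb q M ((j : ℤ) - 1)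
      = gb q (2 * M + 1) (M : ℤ) := by
    rw [Finset.sum_range_succ']
    rw [gb_of_neg (show ((0 : ℕ) : ℤ) - 1 < 0 by norm_num), mul_zero, add_zero]
    have V := gb_vandermonde hq0 hq1 (M + 1) M (M : ℤ)
    rw [show (M + 1) + M = 2 * M + 1 by omega] at V
    rw [V]
    refine Finset.sum_congr rfl fun j _ => ?_
    have hs := gb_symm (q := q) (M + 1) ((M : ℤ) - j)
    rw [show ((M + 1 : ℕ) : ℤ) - ((M : ℤ) - (j : ℤ)) = ((j : ℤ) + 1) by push_cast; ring] at hs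
    have hs' : gb q (M + 1) ((j + 1 : ℕ) : ℤ) = gb q (M + 1) ((M : ℤ) - j) := by
      rw [show ((j + 1 : ℕ) : ℤ) = (j : ℤ) + 1 by push_cast; ring]; exact hs
    have e1 : ((j + 1 : ℕ) : ℤ) * ((j : ℤ)) = (j : ℤ) * (((M + 1 : ℕ) : ℤ) - (M : ℤ) + j) := by
      push_cast; ring
    rw [show (((j + 1 : ℕ)) : ℤ) - 1 = (j : ℤ) by push_cast; ring]
    rw [e1, hs']
  rw [hSA, hSB]

def tri : ℕ → ℕ
  | 0 => 0
  | j + 1 => tri j + j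

lemma tri_mul2 (j : ℕ) : 2 * tri j = j * (j - 1) := by
  induction j with
  | zero => rfl
  | succ i IH =>
    cases i with
    | zero => rfl
    | succ m =>
      show 2 * (tri (m + 1) + (m + 1)) = (m + 2) * (m + 1)
      have h1 : 2 * tri (m + 1) = (m + 1) * m := by
        simpa using IH
      have h2 : (m + 2) * (m + 1) = (m + 1) * m + 2 * (m + 1) := by ring
      omega

/-- Coefficients in Gauss's q-binomial theorem. -/
noncomputable def gc (q : ℝ) (N j : ℕ) : ℝ := (-1) ^ j * q ^ tri j * gb q N j

lemma gc_sq (q : ℝ) (N j : ℕ) : (gc q N j) ^ 2 = q ^ (j * (j - 1)) * (gb q N j) ^ 2 := by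
  unfold gc
  rw [mul_pow, mul_pow, ← pow_mul, ← pow_mul, mul_comm (tri j) 2, tri_mul2,
    show (-1 : ℝ) ^ (j * 2) = 1 from Even.neg_one_pow ⟨j, by ring⟩]
  ring

include hq0 hq1 in
lemma gc_zero (N : ℕ) : gc q N 0 = 1 := by
  simp [gc, tri, gb_zero_right hq0 hq1]

include hq0 hq1 in
lemma gc_rec (N j : ℕ) (hj : j ≤ N) :
    gc q (N + 1) (j + 1) = gc q N (j + 1) - q ^ N * gc q N j := by
  unfold gc
  have hp := gb_pascal₁ hq0 hq1 N ((j + 1 : ℕ) : ℤ)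
  rw [show ((j + 1 : ℕ) : ℤ) - 1 = ((j : ℕ) : ℤ) by push_cast; ring,
    show (N : ℤ) + 1 - ((j + 1 : ℕ) : ℤ) = ((N - j : ℕ) : ℤ) by omega, zpow_natCast] at hp
  rw [hp, show tri (j + 1) = tri j + j from rfl, mul_add,
    show ((-1 : ℝ)) ^ (j + 1) = -(-1 : ℝ) ^ j by rw [pow_succ]; ring]
  have hee : q ^ (tri j + j) * q ^ (N - j) = q ^ N * q ^ tri j := by
    rw [← pow_add, ← pow_add]; congr 1; omega
  linear_combination (-(-1 : ℝ) ^ j * gb q N (j : ℤ)) * hee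

include hq0 hq1 in
/-- Gauss's q-binomial theorem (finite). -/
lemma gauss_prod (N : ℕ) (z : ℂ) :
    ∏ k ∈ Finset.range N, (1 - (q : ℂ) ^ k * z)
      = ∑ j ∈ Finset.range (N + 1), (gc q N j : ℂ) * z ^ j := by
  induction N with
  | zero => simp [gc_zero hq0 hq1]
  | succ N IH =>
    rw [Finset.prod_range_succ, IH]
    rw [Finset.sum_range_succ' (fun j => (gc q (N + 1) j : ℂ) * z ^ j) (N + 1)]
    have hrec : ∀ j ∈ Finset.range (N + 1),
        ((gc q (N + 1) (j + 1) : ℝ) : ℂ) * z ^ (j + 1)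
        = ((gc q N (j + 1) : ℝ) : ℂ) * z ^ (j + 1)
          - (q : ℂ) ^ N * (((gc q N j : ℝ) : ℂ) * z ^ j) * z := by
      intro j hj
      rw [gc_rec hq0 hq1 N j (by simpa using Nat.lt_succ_iff.mp (Finset.mem_range.mp hj))]
      push_cast
      ring
    rw [Finset.sum_congr rfl hrec, Finset.sum_sub_distrib]
    have h1 : ∑ j ∈ Finset.range (N + 1), ((gc q N (j + 1) : ℝ) : ℂ) * z ^ (j + 1)
        = (∑ j ∈ Finset.range (N + 1), ((gc q N j : ℝ) : ℂ) * z ^ j)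
          - (gc q N 0 : ℂ) * z ^ 0 := by
      have := Finset.sum_range_succ' (fun j => ((gc q N j : ℝ) : ℂ) * z ^ j) N
      -- this : ∑_{range (N+1)} = ∑_{range N} f (j+1) + f 0
      -- we want: ∑_{j ∈ range (N+1)} f (j+1) = ∑_{range (N+2)} f - f 0, use (N+1) version
      have h2 := Finset.sum_range_succ' (fun j => ((gc q N j : ℝ) : ℂ) * z ^ j) (N + 1)
      -- h2 : ∑_{range (N+2)} f = ∑_{j ∈ range (N+1)} f (j+1) + f 0
      have h3 : ∑ j ∈ Finset.range (N + 2), ((gc q N j : ℝ) : ℂ) * z ^ j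
          = ∑ j ∈ Finset.range (N + 1), ((gc q N j : ℝ) : ℂ) * z ^ j := by
        rw [Finset.sum_range_succ]
        have : gc q N (N + 1) = 0 := by
          unfold gc
          rw [gb_of_gt (show (N : ℤ) < ((N + 1 : ℕ) : ℤ) by push_cast; omega)]
          ring
        rw [this]
        push_cast
        ring
      rw [← h3, h2]
      ring
    rw [h1]
    have h4 : ∑ j ∈ Finset.range (N + 1), (q : ℂ) ^ N * (((gc q N j : ℝ) : ℂ) * z ^ j) * z
        = (q : ℂ) ^ N * (∑ j ∈ Finset.range (N + 1), ((gc q N j : ℝ) : ℂ) * z ^ j) * z := by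
      rw [Finset.mul_sum, Finset.sum_mul]
    rw [h4, gc_zero hq0 hq1, gc_zero hq0 hq1]
    push_cast
    ring

lemma factor_complex (θ : ℝ) (k : ℕ) :
    ((1 - 2 * q ^ k * Real.cos (2 * θ) + q ^ (2 * k) : ℝ) : ℂ)
      = (1 - (q : ℂ) ^ k * Complex.exp ((2 * θ : ℝ) * Complex.I))
        * (1 - (q : ℂ) ^ k * Complex.exp (-(2 * θ : ℝ) * Complex.I)) := by
  have h1 : Complex.exp ((2 * θ : ℝ) * Complex.I) * Complex.exp (-(2 * θ : ℝ) * Complex.I)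
      = 1 := by
    rw [← Complex.exp_add]
    norm_num
  have h2 : Complex.exp ((2 * θ : ℝ) * Complex.I) + Complex.exp (-(2 * θ : ℝ) * Complex.I)
      = 2 * ((Real.cos (2 * θ) : ℝ) : ℂ) := by
    rw [Complex.exp_mul_I, Complex.exp_mul_I, Complex.ofReal_cos]
    push_cast
    rw [Complex.cos_neg, Complex.sin_neg]
    ring
  have expand : (1 - (q : ℂ) ^ k * Complex.exp ((2 * θ : ℝ) * Complex.I))
        * (1 - (q : ℂ) ^ k * Complex.exp (-(2 * θ : ℝ) * Complex.I))
      = 1 - (q : ℂ) ^ k * (Complex.exp ((2 * θ : ℝ) * Complex.I)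
          + Complex.exp (-(2 * θ : ℝ) * Complex.I))
        + ((q : ℂ) ^ k) ^ 2 * (Complex.exp ((2 * θ : ℝ) * Complex.I)
          * Complex.exp (-(2 * θ : ℝ) * Complex.I)) := by ring
  rw [expand, h1, h2]
  push_cast
  ring

include hq0 hq1 in
lemma PN_fourier (N : ℕ) (θ : ℝ) :
    ∏ k ∈ Finset.range N, (1 - 2 * q ^ k * Real.cos (2 * θ) + q ^ (2 * k))
      = ∑ j ∈ Finset.range (N + 1), ∑ l ∈ Finset.range (N + 1),
          gc q N j * gc q N l * Real.cos ((2 * (j : ℝ) - 2 * l) * θ) := by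
  have hC : ((∏ k ∈ Finset.range N, (1 - 2 * q ^ k * Real.cos (2 * θ) + q ^ (2 * k)) : ℝ) : ℂ)
      = ∑ j ∈ Finset.range (N + 1), ∑ l ∈ Finset.range (N + 1),
          ((gc q N j * gc q N l : ℝ) : ℂ)
            * Complex.exp (((2 * (j : ℝ) - 2 * l) * θ : ℝ) * Complex.I) := by
    rw [Complex.ofReal_prod]
    calc ∏ k ∈ Finset.range N, ((1 - 2 * q ^ k * Real.cos (2 * θ) + q ^ (2 * k) : ℝ) : ℂ)
        = ∏ k ∈ Finset.range N, ((1 - (q : ℂ) ^ k * Complex.exp ((2 * θ : ℝ) * Complex.I))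
            * (1 - (q : ℂ) ^ k * Complex.exp (-(2 * θ : ℝ) * Complex.I))) :=
          Finset.prod_congr rfl fun k _ => factor_complex θ k
      _ = (∏ k ∈ Finset.range N, (1 - (q : ℂ) ^ k * Complex.exp ((2 * θ : ℝ) * Complex.I)))
            * ∏ k ∈ Finset.range N, (1 - (q : ℂ) ^ k * Complex.exp (-(2 * θ : ℝ) * Complex.I)) :=
          Finset.prod_mul_distrib
      _ = (∑ j ∈ Finset.range (N + 1),
              (gc q N j : ℂ) * Complex.exp ((2 * θ : ℝ) * Complex.I) ^ j)
            * ∑ l ∈ Finset.range (N + 1),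
              (gc q N l : ℂ) * Complex.exp (-(2 * θ : ℝ) * Complex.I) ^ l := by
          rw [gauss_prod hq0 hq1 N, gauss_prod hq0 hq1 N]
      _ = ∑ j ∈ Finset.range (N + 1), ∑ l ∈ Finset.range (N + 1),
            ((gc q N j : ℂ) * Complex.exp ((2 * θ : ℝ) * Complex.I) ^ j)
              * ((gc q N l : ℂ) * Complex.exp (-(2 * θ : ℝ) * Complex.I) ^ l) :=
          Finset.sum_mul_sum _ _ _ _
      _ = _ := by
          refine Finset.sum_congr rfl fun j _ => Finset.sum_congr rfl fun l _ => ?_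
          rw [← Complex.exp_nat_mul, ← Complex.exp_nat_mul, mul_mul_mul_comm,
            ← Complex.exp_add]
          have : (j : ℂ) * ((2 * θ : ℝ) * Complex.I) + (l : ℂ) * (-(2 * θ : ℝ) * Complex.I)
              = ((2 * (j : ℝ) - 2 * l) * θ : ℝ) * Complex.I := by
            push_cast
            ring
          rw [this]
          push_cast
          ring
  have := congrArg Complex.re hC
  rw [Complex.ofReal_re] at this
  rw [this, Complex.re_sum]
  refine Finset.sum_congr rfl fun j _ => ?_
  rw [Complex.re_sum]
  refine Finset.sum_congr rfl fun l _ => ?_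
  rw [Complex.re_ofReal_mul, Complex.exp_ofReal_mul_I_re]

lemma cos_orth (j l : ℕ) :
    (∫ θ in (0:ℝ)..Real.pi, Real.cos ((2 * (j : ℝ) - 2 * l) * θ))
      = if j = l then Real.pi else 0 := by
  by_cases h : j = l
  · subst h
    simp
  · rw [if_neg h]
    set c : ℝ := 2 * (j : ℝ) - 2 * l with hc
    have hcne : c ≠ 0 := by
      rw [hc]
      have : (j : ℝ) ≠ (l : ℝ) := by exact_mod_cast h
      intro hzero
      apply this
      linarith
    have key := intervalIntegral.mul_integral_comp_mul_left (a := 0) (b := Real.pi)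
      (f := Real.cos) c
    rw [mul_zero, integral_cos] at key
    have hsin : Real.sin (c * Real.pi) = 0 := by
      have : c * Real.pi = ((2 * (j : ℤ) - 2 * l : ℤ) : ℝ) * Real.pi := by
        rw [hc]; push_cast; ring
      rw [this, Real.sin_int_mul_pi]
    rw [hsin, Real.sin_zero, sub_zero, mul_comm] at key
    exact (mul_eq_zero.mp key).resolve_right hcne

include hq0 hq1 in
lemma integral_PN (N : ℕ) :
    (∫ θ in (0:ℝ)..Real.pi,
        ∏ k ∈ Finset.range N, (1 - 2 * q ^ k * Real.cos (2 * θ) + q ^ (2 * k)))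
      = Real.pi * ∑ j ∈ Finset.range (N + 1), q ^ (j * (j - 1)) * (gb q N j) ^ 2 := by
  have hint : ∀ (a c : ℝ), IntervalIntegrable (fun θ => a * Real.cos (c * θ))
      MeasureTheory.volume (0:ℝ) Real.pi := by
    intro a c
    exact (continuous_const.mul (Real.continuous_cos.comp
      (continuous_const.mul continuous_id))).intervalIntegrable _ _
  simp_rw [PN_fourier hq0 hq1 N]
  have hInt1 : ∀ j ∈ Finset.range (N + 1), IntervalIntegrable
      (fun θ => ∑ l ∈ Finset.range (N + 1),
        gc q N j * gc q N l * Real.cos ((2 * (j : ℝ) - 2 * l) * θ))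
      MeasureTheory.volume (0:ℝ) Real.pi := by
    intro j _
    have := IntervalIntegrable.sum (μ := MeasureTheory.volume) (a := (0:ℝ)) (b := Real.pi)
      (Finset.range (N + 1))
      (f := fun l => fun θ => gc q N j * gc q N l * Real.cos ((2 * (j : ℝ) - 2 * l) * θ))
      (fun l _ => hint (gc q N j * gc q N l) (2 * (j:ℝ) - 2 * l))
    have e : (fun θ => ∑ l ∈ Finset.range (N + 1),
        gc q N j * gc q N l * Real.cos ((2 * (j : ℝ) - 2 * l) * θ))
        = ∑ l ∈ Finset.range (N + 1),
          (fun θ => gc q N j * gc q N l * Real.cos ((2 * (j : ℝ) - 2 * l) * θ)) := by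
      funext θ
      simp [Finset.sum_apply]
    rw [e]
    exact this
  rw [intervalIntegral.integral_finset_sum hInt1]
  have hswap : ∀ j ∈ Finset.range (N + 1),
      (∫ θ in (0:ℝ)..Real.pi, ∑ l ∈ Finset.range (N + 1),
        gc q N j * gc q N l * Real.cos ((2 * (j : ℝ) - 2 * l) * θ))
      = ∑ l ∈ Finset.range (N + 1), (if j = l then gc q N j * gc q N l * Real.pi else 0) := by
    intro j _
    rw [intervalIntegral.integral_finset_sum
      (fun l _ => hint (gc q N j * gc q N l) (2 * (j:ℝ) - 2 * l))]
    refine Finset.sum_congr rfl fun l _ => ?_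
    rw [intervalIntegral.integral_const_mul, cos_orth j l]
    split <;> ring
  rw [Finset.sum_congr rfl hswap]
  rw [Finset.mul_sum]
  refine Finset.sum_congr rfl fun j hj => ?_
  rw [Finset.sum_ite_eq (Finset.range (N + 1)) j
    (fun l => gc q N j * gc q N l * Real.pi), if_pos hj, ← gc_sq]
  ring

/-- From a convergent sum of logs, a convergent product. -/
lemma hasProd_of_hasSum_log {f : ℕ → ℝ} (hf : ∀ k, 0 < f k) {S : ℝ}
    (h : HasSum (fun k => Real.log (f k)) S) : HasProd f (Real.exp S) := by
  have key := (Real.continuous_exp.tendsto S).comp h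
  have : (Real.exp ∘ fun s : Finset ℕ => ∑ i ∈ s, Real.log (f i))
      = fun s : Finset ℕ => ∏ i ∈ s, f i := by
    funext s
    rw [Function.comp_apply, Real.exp_sum]
    exact Finset.prod_congr rfl fun i _ => Real.exp_log (hf i)
  rw [this] at key
  exact key

lemma abs_log_le_of {t ε δ : ℝ} (hε : 0 < ε) (ht : ε ≤ t) (hδ : |t - 1| ≤ δ) :
    |Real.log t| ≤ δ * (1 + ε⁻¹) := by
  have htpos : 0 < t := hε.trans_le ht
  have hδ0 : 0 ≤ δ := (abs_nonneg _).trans hδ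
  have h1 : Real.log t ≤ t - 1 := Real.log_le_sub_one_of_pos htpos
  have h2 : Real.log t⁻¹ ≤ t⁻¹ - 1 := Real.log_le_sub_one_of_pos (inv_pos.mpr htpos)
  rw [Real.log_inv] at h2
  have hd := abs_le.mp hδ
  have hεinv : t⁻¹ ≤ ε⁻¹ := inv_anti₀ hε ht
  have htinv : 0 < t⁻¹ := inv_pos.mpr htpos
  have hεinv0 : 0 < ε⁻¹ := inv_pos.mpr hε
  rw [abs_le]
  constructor
  · -- -(δ * (1 + ε⁻¹)) ≤ log t, from log t ≥ 1 - t⁻¹ and t⁻¹ - 1 ≤ δ * ε⁻¹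
    have key : t⁻¹ - 1 ≤ δ * ε⁻¹ := by
      rcases le_total t 1 with hle | hle
      · have e1 : t⁻¹ - 1 = (1 - t) * t⁻¹ := by field_simp
        rw [e1]
        calc (1 - t) * t⁻¹ ≤ δ * t⁻¹ := by nlinarith
          _ ≤ δ * ε⁻¹ := by nlinarith
      · have : t⁻¹ ≤ 1 := by
          rw [inv_le_one_iff₀]; right; exact hle
        nlinarith
    nlinarith
  · nlinarith

include hq0 hq1 in
lemma summable_geom_bound {g : ℕ → ℝ} {C : ℝ}
    (hb : ∀ k, |Real.log (g k)| ≤ C * q ^ k) : Summable fun k => Real.log (g k) := by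
  have hgeom : Summable (fun k : ℕ => C * q ^ k) :=
    (summable_geometric_of_lt_one hq0.le hq1).mul_left C
  have habs : Summable (fun k => |Real.log (g k)|) :=
    Summable.of_nonneg_of_le (fun k => abs_nonneg _) hb hgeom
  exact habs.of_abs

include hq0 hq1 in
lemma exists_hasProd_qpoch : ∃ P : ℝ, 0 < P ∧ HasProd (fun k : ℕ => 1 - q ^ (k + 1)) P := by
  have hpos : ∀ k : ℕ, 0 < 1 - q ^ (k + 1) := fun k => one_sub_pow_pos hq0 hq1 k
  have hb : ∀ k : ℕ, |Real.log (1 - q ^ (k + 1))| ≤ (q * (1 + (1 - q)⁻¹)) * q ^ k := by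
    intro k
    have h1 : (0:ℝ) < 1 - q := by linarith
    have hqk : q ^ (k + 1) ≤ q := by
      calc q ^ (k + 1) ≤ q ^ 1 := pow_le_pow_of_le_one hq0.le hq1.le (by omega)
        _ = q := pow_one q
    have hqk0 : 0 < q ^ (k + 1) := pow_pos hq0 _
    have ht : (1 - q) ≤ 1 - q ^ (k + 1) := by linarith
    have hδ : |(1 - q ^ (k + 1)) - 1| ≤ q ^ (k + 1) := by
      rw [show (1 - q ^ (k + 1)) - 1 = -(q ^ (k + 1)) by ring, abs_neg,
        abs_of_pos hqk0]
    calc |Real.log (1 - q ^ (k + 1))| ≤ q ^ (k + 1) * (1 + (1 - q)⁻¹) :=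
          abs_log_le_of h1 ht hδ
      _ = (q * (1 + (1 - q)⁻¹)) * q ^ k := by ring
  have hsum : Summable (fun k => Real.log (1 - q ^ (k + 1))) := summable_geom_bound hq0 hq1 hb
  obtain ⟨S, hS⟩ := hsum
  exact ⟨Real.exp S, Real.exp_pos S, hasProd_of_hasSum_log hpos hS⟩

include hq0 hq1 in
lemma exists_hasProd_theta {θ : ℝ} (hθ : Real.cos (2 * θ) < 1) :
    HasProd (fun k : ℕ => 1 - 2 * q ^ k * Real.cos (2 * θ) + q ^ (2 * k))
      (Real.exp (∑' k, Real.log (1 - 2 * q ^ k * Real.cos (2 * θ) + q ^ (2 * k)))) := by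
  set c := Real.cos (2 * θ) with hc
  have hc1 : -1 ≤ c := Real.neg_one_le_cos (2 * θ)
  have hpos : ∀ k : ℕ, 0 < 1 - 2 * q ^ k * c + q ^ (2 * k) := by
    intro k
    have hqk : 0 < q ^ k := pow_pos hq0 k
    have : 1 - 2 * q ^ k * c + q ^ (2 * k) = (1 - q ^ k) ^ 2 + 2 * q ^ k * (1 - c) := by
      rw [pow_mul, pow_two, pow_two]; ring
    rw [this]
    have h2 : 0 < 2 * q ^ k * (1 - c) := by
      apply mul_pos (by positivity)
      linarith
    positivity
  have hb : ∀ k : ℕ, |Real.log (1 - 2 * q ^ (k + 1) * c + q ^ (2 * (k + 1)))|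
      ≤ (3 * q * (1 + (((1 - q) ^ 2)⁻¹))) * q ^ k := by
    intro k
    have h1q : (0:ℝ) < 1 - q := by linarith
    have hε : (0:ℝ) < (1 - q) ^ 2 := by positivity
    have hqk1 : 0 < q ^ (k + 1) := pow_pos hq0 _
    have hqk1' : q ^ (k + 1) ≤ q := by
      calc q ^ (k + 1) ≤ q ^ 1 := pow_le_pow_of_le_one hq0.le hq1.le (by omega)
        _ = q := pow_one q
    have hqlt : q ^ (k + 1) < 1 := lt_of_le_of_lt hqk1' hq1
    have ht : (1 - q) ^ 2 ≤ 1 - 2 * q ^ (k + 1) * c + q ^ (2 * (k + 1)) := by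
      have e : 1 - 2 * q ^ (k + 1) * c + q ^ (2 * (k + 1))
          = (1 - q ^ (k + 1)) ^ 2 + 2 * q ^ (k + 1) * (1 - c) := by
        rw [pow_mul, pow_two, pow_two]; ring
      rw [e]
      have h2 : 0 ≤ 2 * q ^ (k + 1) * (1 - c) := by
        apply mul_nonneg (by positivity)
        linarith
      have h3 : (1 - q) ^ 2 ≤ (1 - q ^ (k + 1)) ^ 2 := by
        apply pow_le_pow_left₀ h1q.le
        linarith
      linarith
    have hδ : |(1 - 2 * q ^ (k + 1) * c + q ^ (2 * (k + 1))) - 1| ≤ 3 * q ^ (k + 1) := by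
      rw [abs_le]
      have h2k : q ^ (2 * (k + 1)) ≤ q ^ (k + 1) := by
        apply pow_le_pow_of_le_one hq0.le hq1.le
        omega
      have h2k0 : 0 < q ^ (2 * (k + 1)) := pow_pos hq0 _
      have hcabs : |2 * q ^ (k + 1) * c| ≤ 2 * q ^ (k + 1) := by
        rw [abs_mul, abs_of_pos (by positivity : (0:ℝ) < 2 * q ^ (k + 1))]
        have : |c| ≤ 1 := Real.abs_cos_le_one (2 * θ)
        nlinarith
      have := abs_le.mp hcabs
      constructor <;> nlinarith
    calc |Real.log (1 - 2 * q ^ (k + 1) * c + q ^ (2 * (k + 1)))|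
        ≤ (3 * q ^ (k + 1)) * (1 + (((1 - q) ^ 2)⁻¹)) := abs_log_le_of hε ht hδ
      _ = (3 * q * (1 + (((1 - q) ^ 2)⁻¹))) * q ^ k := by ring
  have hsum1 : Summable (fun k => Real.log (1 - 2 * q ^ (k + 1) * c + q ^ (2 * (k + 1)))) :=
    summable_geom_bound hq0 hq1 hb
  have hsum : Summable (fun k => Real.log (1 - 2 * q ^ k * c + q ^ (2 * k))) := by
    rw [← summable_nat_add_iff 1]
    exact hsum1
  exact hasProd_of_hasSum_log hpos hsum.hasSum

include hq0 hq1 in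
lemma PN_bound (N : ℕ) (θ : ℝ) :
    |∏ k ∈ Finset.range N, (1 - 2 * q ^ k * Real.cos (2 * θ) + q ^ (2 * k))|
      ≤ Real.exp (2 * (1 - q)⁻¹) := by
  have hc1 : Real.cos (2 * θ) ≤ 1 := Real.cos_le_one (2 * θ)
  have hc2 : -1 ≤ Real.cos (2 * θ) := Real.neg_one_le_cos (2 * θ)
  have hnn : ∀ k ∈ Finset.range N, (0:ℝ) ≤ 1 - 2 * q ^ k * Real.cos (2 * θ) + q ^ (2 * k) := by
    intro k _
    have hqk : 0 < q ^ k := pow_pos hq0 k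
    have e : 1 - 2 * q ^ k * Real.cos (2 * θ) + q ^ (2 * k)
        = (1 - q ^ k) ^ 2 + 2 * q ^ k * (1 - Real.cos (2 * θ)) := by
      rw [pow_mul, pow_two, pow_two]; ring
    rw [e]
    have : 0 ≤ 2 * q ^ k * (1 - Real.cos (2 * θ)) := by
      apply mul_nonneg (by positivity); linarith
    positivity
  rw [abs_of_nonneg (Finset.prod_nonneg hnn)]
  have hle : ∀ k ∈ Finset.range N, (1 - 2 * q ^ k * Real.cos (2 * θ) + q ^ (2 * k))
      ≤ Real.exp (2 * q ^ k) := by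
    intro k _
    have hqk : 0 < q ^ k := pow_pos hq0 k
    have h1 : (1 - 2 * q ^ k * Real.cos (2 * θ) + q ^ (2 * k)) ≤ (1 + q ^ k) ^ 2 := by
      rw [show q ^ (2 * k) = (q ^ k) ^ 2 by rw [two_mul, pow_add, sq]]
      nlinarith [sq_nonneg (q ^ k)]
    have h2 : (1 + q ^ k) ^ 2 ≤ Real.exp (q ^ k) ^ 2 := by
      apply pow_le_pow_left₀ (by positivity)
      have := Real.add_one_le_exp (q ^ k)
      linarith
    have h3 : Real.exp (q ^ k) ^ 2 = Real.exp (2 * q ^ k) := by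
      rw [sq, ← Real.exp_add]; ring_nf
    linarith
  calc ∏ k ∈ Finset.range N, (1 - 2 * q ^ k * Real.cos (2 * θ) + q ^ (2 * k))
      ≤ ∏ k ∈ Finset.range N, Real.exp (2 * q ^ k) := Finset.prod_le_prod hnn hle
    _ = Real.exp (∑ k ∈ Finset.range N, 2 * q ^ k) := (Real.exp_sum _ _).symm
    _ ≤ Real.exp (2 * (1 - q)⁻¹) := by
        rw [Real.exp_le_exp]
        have hsum : ∑ k ∈ Finset.range N, q ^ k ≤ (1 - q)⁻¹ := by
          have h1 := Summable.sum_le_tsum (Finset.range N) (fun k _ => (pow_pos hq0 k).le)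
            (summable_geometric_of_lt_one hq0.le hq1)
          rwa [tsum_geometric_of_lt_one hq0.le hq1] at h1
        rw [← Finset.mul_sum]
        linarith
  
include hq0 hq1 in
lemma tendsto_integral_PN :
    Filter.Tendsto (fun N => ∫ θ in (0:ℝ)..Real.pi,
        ∏ k ∈ Finset.range N, (1 - 2 * q ^ k * Real.cos (2 * θ) + q ^ (2 * k)))
      Filter.atTop
      (nhds (∫ θ in (0:ℝ)..Real.pi,
        ∏' k : ℕ, (1 - 2 * q ^ k * Real.cos (2 * θ) + q ^ (2 * k)))) := by
  apply intervalIntegral.tendsto_integral_filter_of_dominated_convergence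
    (bound := fun _ => Real.exp (2 * (1 - q)⁻¹))
  · apply Filter.Eventually.of_forall
    intro N
    apply Continuous.aestronglyMeasurable
    apply continuous_finset_prod
    intro k _
    have : Continuous fun θ : ℝ => Real.cos (2 * θ) :=
      Real.continuous_cos.comp (continuous_const.mul continuous_id)
    continuity
  · apply Filter.Eventually.of_forall
    intro N
    apply MeasureTheory.ae_of_all
    intro x _
    rw [Real.norm_eq_abs]
    exact PN_bound hq0 hq1 N x
  · exact intervalIntegrable_const
  · have hae : ∀ᵐ (x : ℝ) ∂MeasureTheory.volume, x ≠ Real.pi := by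
      rw [MeasureTheory.ae_iff]
      simp only [not_not]
      have : {x : ℝ | x = Real.pi} = {Real.pi} := by
        ext y; simp
      rw [this]
      exact MeasureTheory.measure_singleton _
    filter_upwards [hae] with x hx hmem
    rw [Set.uIoc_of_le Real.pi_pos.le] at hmem
    have h0x : 0 < x := hmem.1
    have hxπ : x < Real.pi := lt_of_le_of_ne hmem.2 hx
    have hsin : 0 < Real.sin x := Real.sin_pos_of_pos_of_lt_pi h0x hxπ
    have hcos : Real.cos (2 * x) < 1 := by
      have h1 : Real.cos (2 * x) = Real.cos x ^ 2 - Real.sin x ^ 2 := Real.cos_two_mul' x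
      have h2 := Real.sin_sq_add_cos_sq x
      nlinarith
    have h := exists_hasProd_theta hq0 hq1 hcos
    rw [h.tprod_eq]
    exact h.tendsto_prod_nat

theorem main (hq0 : 0 < q) (hq1 : q < 1) :
    (1 / (2 * Real.pi)) *
        ∫ θ in (0 : ℝ)..Real.pi,
          (∏' k : ℕ, (1 - q ^ (k + 1))) *
            (∏' k : ℕ, (1 - 2 * q ^ k * Real.cos (2 * θ) + q ^ (2 * k))) = 1 := by
  obtain ⟨P, hP0, hP⟩ := exists_hasProd_qpoch hq0 hq1
  have hPeq : (∏' k : ℕ, (1 - q ^ (k + 1))) = P := hP.tprod_eq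
  have hqp_tendsto : Filter.Tendsto (fun N => qp q N) Filter.atTop (nhds P) :=
    hP.tendsto_prod_nat
  have h2M : Filter.Tendsto (fun M : ℕ => 2 * M + 1) Filter.atTop Filter.atTop :=
    Filter.tendsto_atTop_mono (fun M => by simp only [id]; omega) Filter.tendsto_id
  have t1 : Filter.Tendsto (fun M => qp q (2 * M + 1)) Filter.atTop (nhds P) :=
    hqp_tendsto.comp h2M
  have t2 : Filter.Tendsto (fun M => qp q (M + 1)) Filter.atTop (nhds P) :=
    hqp_tendsto.comp (Filter.tendsto_add_atTop_nat 1)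
  have t3 : Filter.Tendsto (fun M => qp q M) Filter.atTop (nhds P) := hqp_tendsto
  have hPP : P * P ≠ 0 := by positivity
  have hlim2 : Filter.Tendsto (fun M => Real.pi *
      (qp q (2 * M + 1) / (qp q (M + 1) * qp q M)
        + qp q (2 * M + 1) / (qp q M * qp q (M + 1)))) Filter.atTop
      (nhds (Real.pi * (P / (P * P) + P / (P * P)))) :=
    tendsto_const_nhds.mul ((t1.div (t2.mul t3) hPP).add (t1.div (t3.mul t2) hPP))
  have hseq : ∀ M : ℕ, (∫ θ in (0:ℝ)..Real.pi,
        ∏ k ∈ Finset.range (M + 1), (1 - 2 * q ^ k * Real.cos (2 * θ) + q ^ (2 * k)))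
      = Real.pi * (qp q (2 * M + 1) / (qp q (M + 1) * qp q M)
          + qp q (2 * M + 1) / (qp q M * qp q (M + 1))) := by
    intro M
    rw [integral_PN hq0 hq1 (M + 1), T_eq hq0 hq1 M]
    rw [show ((M : ℤ) + 1) = ((M + 1 : ℕ) : ℤ) by push_cast; ring]
    rw [gb_nat _ _ (by omega : M + 1 ≤ 2 * M + 1), gb_nat _ _ (by omega : M ≤ 2 * M + 1)]
    rw [show 2 * M + 1 - (M + 1) = M by omega, show 2 * M + 1 - M = M + 1 by omega]
  have hDCT := (tendsto_integral_PN hq0 hq1).comp (Filter.tendsto_add_atTop_nat 1)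
  have hDCT' : Filter.Tendsto (fun M => Real.pi *
      (qp q (2 * M + 1) / (qp q (M + 1) * qp q M)
        + qp q (2 * M + 1) / (qp q M * qp q (M + 1)))) Filter.atTop
      (nhds (∫ θ in (0:ℝ)..Real.pi,
        ∏' k : ℕ, (1 - 2 * q ^ k * Real.cos (2 * θ) + q ^ (2 * k)))) := by
    have : (fun M => Real.pi * (qp q (2 * M + 1) / (qp q (M + 1) * qp q M)
        + qp q (2 * M + 1) / (qp q M * qp q (M + 1))))
        = (fun N => ∫ θ in (0:ℝ)..Real.pi,
            ∏ k ∈ Finset.range N, (1 - 2 * q ^ k * Real.cos (2 * θ) + q ^ (2 * k)))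
          ∘ (fun M => M + 1) := by
      funext M
      exact (hseq M).symm
    rw [this]
    exact hDCT
  have hI : (∫ θ in (0:ℝ)..Real.pi,
      ∏' k : ℕ, (1 - 2 * q ^ k * Real.cos (2 * θ) + q ^ (2 * k)))
      = Real.pi * (P / (P * P) + P / (P * P)) :=
    tendsto_nhds_unique hDCT' hlim2
  rw [intervalIntegral.integral_const_mul, hPeq, hI]
  have hπ : Real.pi ≠ 0 := Real.pi_ne_zero
  field_simp
  ring

end QHermite

/-- Normalization of the q-Hermite measure (the `k = 0` moment of the Majorana
double-scaled SYK model):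
`(1/2π) ∫₀^π (q;q)_∞ (e^{2iθ};q)_∞ (e^{−2iθ};q)_∞ dθ = 1` for `0 < q < 1`. -/
theorem qHermite_measure_normalization (q : ℝ) (hq0 : 0 < q) (hq1 : q < 1) :
    (1 / (2 * Real.pi)) *
        ∫ θ in (0 : ℝ)..Real.pi,
          (∏' k : ℕ, (1 - q ^ (k + 1))) *
            (∏' k : ℕ, (1 - 2 * q ^ k * Real.cos (2 * θ) + q ^ (2 * k))) = 1 :=
  QHermite.main hq0 hq1
end
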